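/- arXiv:1309.6385 — 3 statements merged into one kernel-verified Lean document; each statement's English description precedes it below -/
import Mathlib

section
/- Let (A,H,◁,▷) be a matched pair of cosemisimple Hopf algebras with normal integrals φ_A ∈ A^∨ and φ_H ∈ H^∨. Then the bicrossproduct A⋈H is a cosemisimple Hopf algebra, the functional φ(ax) = φ_A(a)φ_H(x) is a normal integral on A⋈H, and the identities φ_A(a)φ_H(xy) = ∑φ_A(x₁▷a₁)φ_H((x₂◁a₂)y) and φ_A(ba)φ_H(x) = ∑φ_A(b(x₁▷a₁))φ_H(x₂◁a₂) hold for all x,y ∈ H and a,b ∈ A. -/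
open scoped TensorProduct
open Coalgebra

noncomputable section

/-- A Sweedler representation of the comultiplication of `x`:
`Δ x = ∑ᵢ x1 i ⊗ x2 i`. -/
def Rep2 {H : Type} [AddCommGroup H] [Module ℂ H] [Coalgebra ℂ H]
    {ι : Type} (x : H) (s : Finset ι) (x1 x2 : ι → H) : Prop :=
  Coalgebra.comul (R := ℂ) x = ∑ i ∈ s, x1 i ⊗ₜ[ℂ] x2 i

/-- A representation of an element of a tensor product as a finite sum of pure tensors. -/
def TRep {M N : Type} [AddCommGroup M] [Module ℂ M] [AddCommGroup N] [Module ℂ N]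
    {ι : Type} (w : M ⊗[ℂ] N) (s : Finset ι) (p : ι → M) (q : ι → N) : Prop :=
  w = ∑ i ∈ s, p i ⊗ₜ[ℂ] q i

/-- The iterated comultiplication `x ↦ ∑ (x₁ ⊗ x₂) ⊗ x₃`. -/
def comul3 (H : Type) [AddCommGroup H] [Module ℂ H] [Coalgebra ℂ H] :
    H →ₗ[ℂ] (H ⊗[ℂ] H) ⊗[ℂ] H :=
  (LinearMap.rTensor H (Coalgebra.comul (R := ℂ))) ∘ₗ Coalgebra.comul (R := ℂ)

/-- The iterated comultiplication with four output legs. -/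
def comul4 (H : Type) [AddCommGroup H] [Module ℂ H] [Coalgebra ℂ H] :
    H →ₗ[ℂ] ((H ⊗[ℂ] H) ⊗[ℂ] H) ⊗[ℂ] H :=
  (LinearMap.rTensor H (comul3 H)) ∘ₗ Coalgebra.comul (R := ℂ)

/-- The iterated comultiplication with five output legs. -/
def comul5 (H : Type) [AddCommGroup H] [Module ℂ H] [Coalgebra ℂ H] :
    H →ₗ[ℂ] (((H ⊗[ℂ] H) ⊗[ℂ] H) ⊗[ℂ] H) ⊗[ℂ] H :=
  (LinearMap.rTensor H (comul4 H)) ∘ₗ Coalgebra.comul (R := ℂ)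

/-- The iterated comultiplication with six output legs. -/
def comul6 (H : Type) [AddCommGroup H] [Module ℂ H] [Coalgebra ℂ H] :
    H →ₗ[ℂ] ((((H ⊗[ℂ] H) ⊗[ℂ] H) ⊗[ℂ] H) ⊗[ℂ] H) ⊗[ℂ] H :=
  (LinearMap.rTensor H (comul5 H)) ∘ₗ Coalgebra.comul (R := ℂ)

/-- A `*`-structure on a Hopf algebra over `ℂ`: a conjugate-linear involution which is
antimultiplicative and comultiplicative.  Together with the Hopf algebra this is the data of
a `*`-Hopf algebra. -/
structure StarHopf (H : Type) [Ring H] [HopfAlgebra ℂ H] : Type where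
  st : H → H
  st_add : ∀ x y : H, st (x + y) = st x + st y
  st_smul : ∀ (c : ℂ) (x : H), st (c • x) = (starRingEnd ℂ) c • st x
  st_invol : ∀ x : H, st (st x) = x
  st_antimul : ∀ x y : H, st (x * y) = st y * st x
  st_comul : ∀ (x : H) {ι : Type} (s : Finset ι) (x1 x2 : ι → H),
      Rep2 x s x1 x2 →
      Coalgebra.comul (R := ℂ) (st x) = ∑ i ∈ s, st (x1 i) ⊗ₜ[ℂ] st (x2 i)

/-- A right comodule over a Hopf algebra. -/
structure RightComodule (H : Type) [Ring H] [HopfAlgebra ℂ H]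
    (V : Type) [AddCommGroup V] [Module ℂ V] : Type where
  ρ : V →ₗ[ℂ] V ⊗[ℂ] H
  counit_cond : ∀ v : V, (TensorProduct.rid ℂ V)
      ((LinearMap.lTensor V (Coalgebra.counit (R := ℂ))) (ρ v)) = v
  coassoc_cond : ∀ v : V, (LinearMap.rTensor H ρ) (ρ v)
      = (TensorProduct.assoc ℂ V H H).symm
          ((LinearMap.lTensor V (Coalgebra.comul (R := ℂ))) (ρ v))

/-- An inner product: sesquilinear (linear in the first variable), conjugate-symmetric and
positive definite. -/
structure IsInner {V : Type} [AddCommGroup V] [Module ℂ V] (ip : V → V → ℂ) : Prop where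
  add_left : ∀ u u' v : V, ip (u + u') v = ip u v + ip u' v
  smul_left : ∀ (c : ℂ) (u v : V), ip (c • u) v = c * ip u v
  conj_symm : ∀ u v : V, ip v u = (starRingEnd ℂ) (ip u v)
  pos_def : ∀ v : V, v ≠ 0 → 0 < (ip v v).re

/-- The invariance condition `∑ ⟨u₀,v⟩ S(u₁) = ∑ ⟨u,v₀⟩ v₁*` for a sesquilinear form on a
right comodule. -/
def RInvariant {H : Type} [Ring H] [HopfAlgebra ℂ H] (σ : StarHopf H)
    {V : Type} [AddCommGroup V] [Module ℂ V] (c : RightComodule H V)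
    (ip : V → V → ℂ) : Prop :=
  ∀ (u v : V) {ι κ : Type} (s : Finset ι) (t : Finset κ)
    (u0 : ι → V) (u1 : ι → H) (v0 : κ → V) (v1 : κ → H),
    TRep (c.ρ u) s u0 u1 → TRep (c.ρ v) t v0 v1 →
    ∑ i ∈ s, ip (u0 i) v • (HopfAlgebra.antipode (R := ℂ) (u1 i))
      = ∑ j ∈ t, ip u (v0 j) • σ.st (v1 j)

/-- A compact quantum group: a `*`-Hopf algebra such that every right comodule admits an
invariant inner product. -/
def IsCQG (H : Type) [Ring H] [HopfAlgebra ℂ H] (σ : StarHopf H) : Prop :=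
  ∀ (V : Type) [AddCommGroup V] [Module ℂ V] (c : RightComodule H V),
    ∃ ip : V → V → ℂ, IsInner ip ∧ RInvariant σ c ip

/-- `φ` is a normal integral on the Hopf algebra `H` (a two-sided integral with `φ(1) = 1`);
a Hopf algebra is cosemisimple iff it admits a normal integral. -/
def IsNormalIntegral (H : Type) [Ring H] [HopfAlgebra ℂ H] (φ : H →ₗ[ℂ] ℂ) : Prop :=
  φ 1 = 1 ∧
  (∀ (x : H) {ι : Type} (s : Finset ι) (x1 x2 : ι → H), Rep2 x s x1 x2 →
      ∑ i ∈ s, φ (x1 i) • x2 i = φ x • (1 : H)) ∧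
  (∀ (x : H) {ι : Type} (s : Finset ι) (x1 x2 : ι → H), Rep2 x s x1 x2 →
      ∑ i ∈ s, φ (x2 i) • x1 i = φ x • (1 : H))

/-- A matched pair of Hopf algebras `(A, H, ◁, ▷)`:
`tri x a = x ▷ a` and `trl x a = x ◁ a`. -/
structure IsMatchedPair (A H : Type) [Ring A] [HopfAlgebra ℂ A] [Ring H] [HopfAlgebra ℂ H]
    (tri : H →ₗ[ℂ] A →ₗ[ℂ] A) (trl : H →ₗ[ℂ] A →ₗ[ℂ] H) : Prop where
  -- `(A, ▷)` is a left `H`-module coalgebra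
  tri_one_act : ∀ a : A, tri 1 a = a
  tri_mul_act : ∀ (x y : H) (a : A), tri (x * y) a = tri x (tri y a)
  tri_counit : ∀ (x : H) (a : A),
      Coalgebra.counit (R := ℂ) (tri x a)
        = Coalgebra.counit (R := ℂ) x * Coalgebra.counit (R := ℂ) a
  tri_comul : ∀ (x : H) (a : A) {ι κ : Type} (s : Finset ι) (t : Finset κ)
      (x1 x2 : ι → H) (a1 a2 : κ → A), Rep2 x s x1 x2 → Rep2 a t a1 a2 →
      Coalgebra.comul (R := ℂ) (tri x a)
        = ∑ i ∈ s, ∑ j ∈ t, tri (x1 i) (a1 j) ⊗ₜ[ℂ] tri (x2 i) (a2 j)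
  -- `(H, ◁)` is a right `A`-module coalgebra
  trl_one_act : ∀ x : H, trl x 1 = x
  trl_mul_act : ∀ (x : H) (a b : A), trl x (a * b) = trl (trl x a) b
  trl_counit : ∀ (x : H) (a : A),
      Coalgebra.counit (R := ℂ) (trl x a)
        = Coalgebra.counit (R := ℂ) x * Coalgebra.counit (R := ℂ) a
  trl_comul : ∀ (x : H) (a : A) {ι κ : Type} (s : Finset ι) (t : Finset κ)
      (x1 x2 : ι → H) (a1 a2 : κ → A), Rep2 x s x1 x2 → Rep2 a t a1 a2 →
      Coalgebra.comul (R := ℂ) (trl x a)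
        = ∑ i ∈ s, ∑ j ∈ t, trl (x1 i) (a1 j) ⊗ₜ[ℂ] trl (x2 i) (a2 j)
  -- the compatibility relations
  compat_mul : ∀ (x : H) (a b : A) {ι κ : Type} (s : Finset ι) (t : Finset κ)
      (x1 x2 : ι → H) (a1 a2 : κ → A), Rep2 x s x1 x2 → Rep2 a t a1 a2 →
      tri x (a * b) = ∑ i ∈ s, ∑ j ∈ t, tri (x1 i) (a1 j) * tri (trl (x2 i) (a2 j)) b
  compat_one : ∀ x : H, tri x 1 = Coalgebra.counit (R := ℂ) x • (1 : A)
  compat_mul' : ∀ (x y : H) (a : A) {ι κ : Type} (s : Finset ι) (t : Finset κ)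
      (y1 y2 : ι → H) (a1 a2 : κ → A), Rep2 y s y1 y2 → Rep2 a t a1 a2 →
      trl (x * y) a = ∑ i ∈ s, ∑ j ∈ t, trl x (tri (y1 i) (a1 j)) * trl (y2 i) (a2 j)
  compat_one' : ∀ a : A, trl 1 a = Coalgebra.counit (R := ℂ) a • (1 : H)
  compat_sym : ∀ (x : H) (a : A) {ι κ : Type} (s : Finset ι) (t : Finset κ)
      (x1 x2 : ι → H) (a1 a2 : κ → A), Rep2 x s x1 x2 → Rep2 a t a1 a2 →
      ∑ i ∈ s, ∑ j ∈ t, trl (x1 i) (a1 j) ⊗ₜ[ℂ] tri (x2 i) (a2 j)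
        = ∑ i ∈ s, ∑ j ∈ t, trl (x2 i) (a2 j) ⊗ₜ[ℂ] tri (x1 i) (a1 j)

/-- `M`, identified with `A ⊗ H` via `e`, carries the bicrossproduct Hopf algebra structure
`A ⋈ H` of the matched pair `(A, H, ◁, ▷)`. -/
structure IsBicross (A H : Type) [Ring A] [HopfAlgebra ℂ A] [Ring H] [HopfAlgebra ℂ H]
    (tri : H →ₗ[ℂ] A →ₗ[ℂ] A) (trl : H →ₗ[ℂ] A →ₗ[ℂ] H)
    (M : Type) [Ring M] [HopfAlgebra ℂ M] (e : A ⊗[ℂ] H ≃ₗ[ℂ] M) : Prop where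
  mul_def : ∀ (a b : A) (x y : H) {ι κ : Type} (s : Finset ι) (t : Finset κ)
      (x1 x2 : ι → H) (b1 b2 : κ → A), Rep2 x s x1 x2 → Rep2 b t b1 b2 →
      e (a ⊗ₜ[ℂ] x) * e (b ⊗ₜ[ℂ] y)
        = ∑ i ∈ s, ∑ j ∈ t, e ((a * tri (x1 i) (b1 j)) ⊗ₜ[ℂ] (trl (x2 i) (b2 j) * y))
  one_def : (1 : M) = e ((1 : A) ⊗ₜ[ℂ] (1 : H))
  comul_def : ∀ (a : A) (x : H) {ι κ : Type} (s : Finset ι) (t : Finset κ)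
      (a1 a2 : ι → A) (x1 x2 : κ → H), Rep2 a s a1 a2 → Rep2 x t x1 x2 →
      Coalgebra.comul (R := ℂ) (e (a ⊗ₜ[ℂ] x))
        = ∑ i ∈ s, ∑ j ∈ t, e (a1 i ⊗ₜ[ℂ] x1 j) ⊗ₜ[ℂ] e (a2 i ⊗ₜ[ℂ] x2 j)
  counit_def : ∀ (a : A) (x : H),
      Coalgebra.counit (R := ℂ) (e (a ⊗ₜ[ℂ] x))
        = Coalgebra.counit (R := ℂ) a * Coalgebra.counit (R := ℂ) x

section Aux

variable {K : Type} [AddCommGroup K] [Module ℂ K] [Coalgebra ℂ K]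

lemma sum_counit_smul_left {ι : Type*} {x : K} (r : Coalgebra.Repr ℂ x ι) :
    ∑ i ∈ r.index, Coalgebra.counit (R := ℂ) (r.left i) • r.right i = x := by
  have h := Coalgebra.sum_counit_tmul_eq r
  apply_fun (TensorProduct.lid ℂ K) at h
  simpa only [map_sum, TensorProduct.lid_tmul, one_smul] using h

lemma sum_counit_smul_right {ι : Type*} {x : K} (r : Coalgebra.Repr ℂ x ι) :
    ∑ i ∈ r.index, Coalgebra.counit (R := ℂ) (r.right i) • r.left i = x := by
  have h := Coalgebra.sum_tmul_counit_eq r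
  apply_fun (TensorProduct.rid ℂ K) at h
  simpa only [map_sum, TensorProduct.rid_tmul, one_smul] using h

lemma sum3_eq {W : Type} [AddCommGroup W] [Module ℂ W]
    (F : K →ₗ[ℂ] K →ₗ[ℂ] K →ₗ[ℂ] W) {ι κ Λ : Type*} {x : K} (r : Coalgebra.Repr ℂ x ι)
    (r1 : ∀ i : r.ι, Coalgebra.Repr ℂ (r.left i) κ)
    (r2 : ∀ i : r.ι, Coalgebra.Repr ℂ (r.right i) Λ) :
    ∑ i ∈ r.index, ∑ k ∈ (r1 i).index, F ((r1 i).left k) ((r1 i).right k) (r.right i)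
      = ∑ i ∈ r.index, ∑ k ∈ (r2 i).index, F (r.left i) ((r2 i).left k) ((r2 i).right k) := by
  have h := Coalgebra.sum_tmul_tmul_eq r r1 r2
  apply_fun (TensorProduct.lift
    (((TensorProduct.lift.equiv (RingHom.id ℂ) K K W).toLinearMap) ∘ₗ F)) at h
  simpa [map_sum] using h

end Aux

section AuxHopf

variable {K : Type} [Ring K] [HopfAlgebra ℂ K]

lemma counit_antipode' (c : K) :
    Coalgebra.counit (R := ℂ) (HopfAlgebra.antipode (R := ℂ) c)
      = Coalgebra.counit (R := ℂ) c := by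
  have h := HopfAlgebra.sum_mul_antipode_eq_smul (ℛ ℂ c)
  apply_fun Coalgebra.counit (R := ℂ) at h
  simp only [map_sum, Bialgebra.counit_mul, map_smul, Bialgebra.counit_one,
    smul_eq_mul, mul_one] at h
  calc Coalgebra.counit (R := ℂ) (HopfAlgebra.antipode (R := ℂ) c)
      = Coalgebra.counit (R := ℂ) (HopfAlgebra.antipode (R := ℂ)
          (∑ i ∈ (ℛ ℂ c).index,
            Coalgebra.counit (R := ℂ) ((ℛ ℂ c).left i) • (ℛ ℂ c).right i)) := by
        rw [sum_counit_smul_left]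
    _ = Coalgebra.counit (R := ℂ) c := by
        rw [map_sum]
        simp only [map_smul, map_sum, smul_eq_mul]
        exact h

end AuxHopf

section MP

variable {A H : Type} [Ring A] [HopfAlgebra ℂ A] [Ring H] [HopfAlgebra ℂ H]
  (tri : H →ₗ[ℂ] A →ₗ[ℂ] A) (trl : H →ₗ[ℂ] A →ₗ[ℂ] H)

local notation "ε" => Coalgebra.counit (R := ℂ)
local notation "𝒮" => HopfAlgebra.antipode (R := ℂ)

lemma LH_aux (hmp : IsMatchedPair A H tri trl)
    (φH : H →ₗ[ℂ] ℂ) (hφH : IsNormalIntegral H φH)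
    (x : H) (a : A) {ι : Type} (s : Finset ι) (x1 x2 : ι → H)
    (hx : Rep2 x s x1 x2) :
    ∑ i ∈ s, φH (trl (x1 i) a) • x2 i = φH (trl x a) • (1 : H) := by
  classical
  set r : Coalgebra.Repr ℂ a (A × A) := ℛ ℂ a with hrdef
  set r1 : ∀ j : r.ι, Coalgebra.Repr ℂ (r.left j) (A × A) := fun j => ℛ ℂ (r.left j) with hr1def
  set r2 : ∀ j : r.ι, Coalgebra.Repr ℂ (r.right j) (A × A) := fun j => ℛ ℂ (r.right j) with hr2def
  -- the three-leg expression
  set E : H := ∑ j ∈ r.index, ∑ k ∈ (r1 j).index, ∑ i ∈ s,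
      φH (trl (x1 i) ((r1 j).left k)) •
        trl (trl (x2 i) ((r1 j).right k)) (𝒮 (r.right j)) with hEdef
  have EvalB : E = φH (trl x a) • (1 : H) := by
    have step1 : ∀ j ∈ r.index,
        (∑ k ∈ (r1 j).index, ∑ i ∈ s,
          φH (trl (x1 i) ((r1 j).left k)) •
            trl (trl (x2 i) ((r1 j).right k)) (𝒮 (r.right j)))
        = φH (trl x (r.left j)) • trl 1 (𝒮 (r.right j)) := by
      intro j _
      have hrep : Rep2 (trl x (r.left j)) (s ×ˢ (r1 j).index)
          (fun p => trl (x1 p.1) ((r1 j).left p.2))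
          (fun p => trl (x2 p.1) ((r1 j).right p.2)) := by
        unfold Rep2
        rw [Finset.sum_product]
        exact hmp.trl_comul x (r.left j) s (r1 j).index x1 x2 (r1 j).left (r1 j).right
          hx ((r1 j).eq.symm)
      have hint := hφH.2.1 (trl x (r.left j)) (s ×ˢ (r1 j).index) _ _ hrep
      calc (∑ k ∈ (r1 j).index, ∑ i ∈ s,
            φH (trl (x1 i) ((r1 j).left k)) •
              trl (trl (x2 i) ((r1 j).right k)) (𝒮 (r.right j)))
          = (trl.flip (𝒮 (r.right j)))
              (∑ p ∈ s ×ˢ (r1 j).index,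
                φH (trl (x1 p.1) ((r1 j).left p.2)) • trl (x2 p.1) ((r1 j).right p.2)) := by
            rw [map_sum, Finset.sum_product, Finset.sum_comm]
            simp only [map_smul, LinearMap.flip_apply]
        _ = φH (trl x (r.left j)) • trl 1 (𝒮 (r.right j)) := by
            rw [hint, map_smul, LinearMap.flip_apply]
    rw [hEdef, Finset.sum_congr rfl step1]
    have step2 : ∀ j ∈ r.index,
        φH (trl x (r.left j)) • trl 1 (𝒮 (r.right j))
          = (ε (r.right j) * φH (trl x (r.left j))) • (1 : H) := by
      intro j _
      rw [hmp.compat_one', counit_antipode', smul_smul, mul_comm]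
    rw [Finset.sum_congr rfl step2, ← Finset.sum_smul]
    congr 1
    have : ∑ j ∈ r.index, ε (r.right j) * φH (trl x (r.left j))
        = φH (trl x (∑ j ∈ r.index, ε (r.right j) • r.left j)) := by
      rw [map_sum, map_sum]
      exact Finset.sum_congr rfl fun j _ => by rw [map_smul, map_smul, smul_eq_mul]
    rw [this, sum_counit_smul_right r]
  have EvalA : E = ∑ i ∈ s, φH (trl (x1 i) a) • x2 i := by
    set F : ι → (A →ₗ[ℂ] A →ₗ[ℂ] A →ₗ[ℂ] H) := fun i =>
      (φH ∘ₗ trl (x1 i)).smulRight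
        (((LinearMap.mul ℂ A).compr₂ (trl (x2 i))).compl₂ 𝒮) with hFdef
    have hF : ∀ (i : ι) (p q rr : A),
        F i p q rr = φH (trl (x1 i) p) • trl (x2 i) (q * 𝒮 rr) := by
      intro i p q rr
      simp [hFdef, LinearMap.smulRight_apply, LinearMap.compl₂_apply,
        LinearMap.compr₂_apply, LinearMap.mul_apply', LinearMap.smul_apply]
    have step0 : E = ∑ i ∈ s, ∑ j ∈ r.index, ∑ k ∈ (r1 j).index,
        F i ((r1 j).left k) ((r1 j).right k) (r.right j) := by
      calc E = ∑ j ∈ r.index, ∑ i ∈ s, ∑ k ∈ (r1 j).index,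
            φH (trl (x1 i) ((r1 j).left k)) •
              trl (trl (x2 i) ((r1 j).right k)) (𝒮 (r.right j)) := by
            rw [hEdef]
            exact Finset.sum_congr rfl fun j _ => Finset.sum_comm
        _ = ∑ i ∈ s, ∑ j ∈ r.index, ∑ k ∈ (r1 j).index,
            φH (trl (x1 i) ((r1 j).left k)) •
              trl (trl (x2 i) ((r1 j).right k)) (𝒮 (r.right j)) := Finset.sum_comm
        _ = ∑ i ∈ s, ∑ j ∈ r.index, ∑ k ∈ (r1 j).index,
            F i ((r1 j).left k) ((r1 j).right k) (r.right j) := by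
            refine Finset.sum_congr rfl fun i _ => Finset.sum_congr rfl fun j _ =>
              Finset.sum_congr rfl fun k _ => ?_
            rw [hF, ← hmp.trl_mul_act]
    rw [step0]
    have step1 : ∀ i ∈ s, (∑ j ∈ r.index, ∑ k ∈ (r1 j).index,
        F i ((r1 j).left k) ((r1 j).right k) (r.right j))
        = ∑ j ∈ r.index, ∑ k ∈ (r2 j).index,
            F i (r.left j) ((r2 j).left k) ((r2 j).right k) :=
      fun i _ => sum3_eq (F i) r r1 r2
    rw [Finset.sum_congr rfl step1]
    refine Finset.sum_congr rfl fun i _ => ?_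
    have inner : ∀ j ∈ r.index,
        (∑ k ∈ (r2 j).index, F i (r.left j) ((r2 j).left k) ((r2 j).right k))
          = (φH (trl (x1 i) (r.left j)) * ε (r.right j)) • x2 i := by
      intro j _
      have : (∑ k ∈ (r2 j).index, F i (r.left j) ((r2 j).left k) ((r2 j).right k))
          = φH (trl (x1 i) (r.left j)) •
              trl (x2 i) (∑ k ∈ (r2 j).index, (r2 j).left k * 𝒮 ((r2 j).right k)) := by
        rw [map_sum, Finset.smul_sum]
        exact Finset.sum_congr rfl fun k _ => by rw [hF]
      rw [this, HopfAlgebra.sum_mul_antipode_eq_smul (r2 j), map_smul, hmp.trl_one_act,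
        smul_smul]
    rw [Finset.sum_congr rfl inner, ← Finset.sum_smul]
    congr 1
    have : ∑ j ∈ r.index, φH (trl (x1 i) (r.left j)) * ε (r.right j)
        = φH (trl (x1 i) (∑ j ∈ r.index, ε (r.right j) • r.left j)) := by
      rw [map_sum, map_sum]
      exact Finset.sum_congr rfl fun j _ => by rw [map_smul, map_smul, smul_eq_mul, mul_comm]
    rw [this, sum_counit_smul_right r]
  rw [← EvalA, EvalB]


lemma LA_aux (hmp : IsMatchedPair A H tri trl)
    (φA : A →ₗ[ℂ] ℂ) (hφA : IsNormalIntegral A φA)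
    (x : H) (a : A) {κ : Type} (t : Finset κ) (a1 a2 : κ → A)
    (ha : Rep2 a t a1 a2) :
    ∑ j ∈ t, φA (tri x (a2 j)) • a1 j = φA (tri x a) • (1 : A) := by
  classical
  set r : Coalgebra.Repr ℂ x (H × H) := ℛ ℂ x with hrdef
  set r1 : ∀ j : r.ι, Coalgebra.Repr ℂ (r.left j) (H × H) := fun j => ℛ ℂ (r.left j) with hr1def
  set r2 : ∀ j : r.ι, Coalgebra.Repr ℂ (r.right j) (H × H) := fun j => ℛ ℂ (r.right j) with hr2def
  set E : A := ∑ j ∈ r.index, ∑ k ∈ (r1 j).index, ∑ i ∈ t,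
      φA (tri (r.right j) (a2 i)) •
        tri (𝒮 ((r1 j).left k) * (r1 j).right k) (a1 i) with hEdef
  -- trilinear maps (in the three x-legs), one for each i
  set F : κ → (H →ₗ[ℂ] H →ₗ[ℂ] H →ₗ[ℂ] A) := fun i =>
    (((LinearMap.mul ℂ H) ∘ₗ (𝒮 : H →ₗ[ℂ] H)).compr₂ (tri.flip (a1 i))).compr₂
      (LinearMap.smulRightₗ (φA ∘ₗ tri.flip (a2 i))) with hFdef
  have hF : ∀ (i : κ) (p q rr : H),
      F i p q rr = φA (tri rr (a2 i)) • tri (𝒮 p * q) (a1 i) := by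
    intro i p q rr
    simp [hFdef, LinearMap.compr₂_apply, LinearMap.mul_apply', LinearMap.flip_apply,
      LinearMap.smulRightₗ, LinearMap.smulRight_apply]
  have EvalA : E = ∑ i ∈ t, φA (tri x (a2 i)) • a1 i := by
    have step1 : ∀ j ∈ r.index,
        (∑ k ∈ (r1 j).index, ∑ i ∈ t, φA (tri (r.right j) (a2 i)) •
            tri (𝒮 ((r1 j).left k) * (r1 j).right k) (a1 i))
        = ∑ i ∈ t, (ε (r.left j) * φA (tri (r.right j) (a2 i))) • tri 1 (a1 i) := by
      intro j _
      rw [Finset.sum_comm]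
      refine Finset.sum_congr rfl fun i _ => ?_
      have : (∑ k ∈ (r1 j).index, φA (tri (r.right j) (a2 i)) •
            tri (𝒮 ((r1 j).left k) * (r1 j).right k) (a1 i))
          = φA (tri (r.right j) (a2 i)) •
              (tri.flip (a1 i)) (∑ k ∈ (r1 j).index,
                𝒮 ((r1 j).left k) * (r1 j).right k) := by
        rw [map_sum, Finset.smul_sum]
        simp only [LinearMap.flip_apply]
      rw [this, HopfAlgebra.sum_antipode_mul_eq_smul (r1 j), map_smul, smul_smul,
        mul_comm (φA (tri (r.right j) (a2 i))) (ε (r.left j))]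
      rfl
    rw [hEdef, Finset.sum_congr rfl step1, Finset.sum_comm]
    refine Finset.sum_congr rfl fun i _ => ?_
    have : (∑ j ∈ r.index, (ε (r.left j) * φA (tri (r.right j) (a2 i))) • tri 1 (a1 i))
        = (∑ j ∈ r.index, ε (r.left j) * φA (tri (r.right j) (a2 i))) • tri 1 (a1 i) := by
      rw [Finset.sum_smul]
    rw [this, hmp.tri_one_act]
    congr 1
    have : ∑ j ∈ r.index, ε (r.left j) * φA (tri (r.right j) (a2 i))
        = φA ((tri.flip (a2 i)) (∑ j ∈ r.index, ε (r.left j) • r.right j)) := by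
      rw [map_sum, map_sum]
      exact Finset.sum_congr rfl fun j _ => by
        rw [map_smul, map_smul, smul_eq_mul]; rfl
    rw [this, sum_counit_smul_left r]
    rfl
  have EvalB : E = φA (tri x a) • (1 : A) := by
    have step0 : E = ∑ i ∈ t, ∑ j ∈ r.index, ∑ k ∈ (r1 j).index,
        F i ((r1 j).left k) ((r1 j).right k) (r.right j) := by
      calc E = ∑ j ∈ r.index, ∑ i ∈ t, ∑ k ∈ (r1 j).index,
            φA (tri (r.right j) (a2 i)) •
              tri (𝒮 ((r1 j).left k) * (r1 j).right k) (a1 i) := by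
            rw [hEdef]
            exact Finset.sum_congr rfl fun j _ => Finset.sum_comm
        _ = ∑ i ∈ t, ∑ j ∈ r.index, ∑ k ∈ (r1 j).index,
            φA (tri (r.right j) (a2 i)) •
              tri (𝒮 ((r1 j).left k) * (r1 j).right k) (a1 i) := Finset.sum_comm
        _ = ∑ i ∈ t, ∑ j ∈ r.index, ∑ k ∈ (r1 j).index,
            F i ((r1 j).left k) ((r1 j).right k) (r.right j) := by
            refine Finset.sum_congr rfl fun i _ => Finset.sum_congr rfl fun j _ =>
              Finset.sum_congr rfl fun k _ => ?_
            rw [hF]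
    have step1 : (∑ i ∈ t, ∑ j ∈ r.index, ∑ k ∈ (r1 j).index,
          F i ((r1 j).left k) ((r1 j).right k) (r.right j))
        = ∑ j ∈ r.index, ∑ i ∈ t, ∑ k ∈ (r2 j).index,
            F i (r.left j) ((r2 j).left k) ((r2 j).right k) := by
      calc (∑ i ∈ t, ∑ j ∈ r.index, ∑ k ∈ (r1 j).index,
            F i ((r1 j).left k) ((r1 j).right k) (r.right j))
          = ∑ i ∈ t, ∑ j ∈ r.index, ∑ k ∈ (r2 j).index,
              F i (r.left j) ((r2 j).left k) ((r2 j).right k) :=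
            Finset.sum_congr rfl fun i _ => sum3_eq (F i) r r1 r2
        _ = ∑ j ∈ r.index, ∑ i ∈ t, ∑ k ∈ (r2 j).index,
              F i (r.left j) ((r2 j).left k) ((r2 j).right k) := Finset.sum_comm
    rw [step0, step1]
    have step2 : ∀ j ∈ r.index,
        (∑ i ∈ t, ∑ k ∈ (r2 j).index, F i (r.left j) ((r2 j).left k) ((r2 j).right k))
          = (ε (r.left j) * φA (tri (r.right j) a)) • (1 : A) := by
      intro j _
      have hrep : Rep2 (tri (r.right j) a) ((r2 j).index ×ˢ t)
          (fun p => tri ((r2 j).left p.1) (a1 p.2))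
          (fun p => tri ((r2 j).right p.1) (a2 p.2)) := by
        unfold Rep2
        rw [Finset.sum_product]
        exact hmp.tri_comul (r.right j) a (r2 j).index t (r2 j).left (r2 j).right a1 a2
          ((r2 j).eq.symm) ha
      have hint := hφA.2.2 (tri (r.right j) a) ((r2 j).index ×ˢ t) _ _ hrep
      calc (∑ i ∈ t, ∑ k ∈ (r2 j).index, F i (r.left j) ((r2 j).left k) ((r2 j).right k))
          = (tri (𝒮 (r.left j)))
              (∑ p ∈ (r2 j).index ×ˢ t,
                φA (tri ((r2 j).right p.1) (a2 p.2)) • tri ((r2 j).left p.1) (a1 p.2)) := by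
            rw [map_sum, Finset.sum_product, Finset.sum_comm]
            refine Finset.sum_congr rfl fun i _ => Finset.sum_congr rfl fun k _ => ?_
            rw [map_smul, hF, hmp.tri_mul_act]
        _ = (ε (r.left j) * φA (tri (r.right j) a)) • (1 : A) := by
            rw [hint, map_smul, hmp.compat_one, counit_antipode', smul_smul,
              mul_comm (φA (tri (r.right j) a)) (ε (r.left j))]
    rw [Finset.sum_congr rfl step2, ← Finset.sum_smul]
    congr 1
    have : ∑ j ∈ r.index, ε (r.left j) * φA (tri (r.right j) a)
        = φA ((tri.flip a) (∑ j ∈ r.index, ε (r.left j) • r.right j)) := by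
      rw [map_sum, map_sum]
      exact Finset.sum_congr rfl fun j _ => by
        rw [map_smul, map_smul, smul_eq_mul]; rfl
    rw [this, sum_counit_smul_left r]
    rfl
  rw [← EvalA, EvalB]


lemma invH (hmp : IsMatchedPair A H tri trl)
    (φH : H →ₗ[ℂ] ℂ) (hφH : IsNormalIntegral H φH) (x : H) (a : A) :
    φH (trl x a) = ε a * φH x := by
  classical
  set r : Coalgebra.Repr ℂ x (H × H) := ℛ ℂ x with hrdef
  have hx : Rep2 x r.index r.left r.right := r.eq.symm
  have h1 := LH_aux tri trl hmp φH hφH x a r.index r.left r.right hx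
  have h1' : ∑ i ∈ r.index, φH (trl (r.left i) a) * φH (r.right i) = φH (trl x a) := by
    have := congrArg φH h1
    simpa [map_sum, map_smul, smul_eq_mul, hφH.1] using this
  have h2 := hφH.2.2 x r.index r.left r.right hx
  have h2' : ∑ i ∈ r.index, φH (r.right i) * φH (trl (r.left i) a) = φH x * ε a := by
    have := congrArg (φH ∘ₗ trl.flip a) h2
    simp only [map_sum, map_smul, smul_eq_mul, LinearMap.comp_apply,
      LinearMap.flip_apply] at this
    rw [hmp.compat_one'] at this
    simpa [smul_eq_mul, hφH.1] using this
  rw [← h1']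
  calc ∑ i ∈ r.index, φH (trl (r.left i) a) * φH (r.right i)
      = ∑ i ∈ r.index, φH (r.right i) * φH (trl (r.left i) a) :=
        Finset.sum_congr rfl fun i _ => mul_comm _ _
    _ = φH x * ε a := h2'
    _ = ε a * φH x := mul_comm _ _

lemma invA (hmp : IsMatchedPair A H tri trl)
    (φA : A →ₗ[ℂ] ℂ) (hφA : IsNormalIntegral A φA) (x : H) (a : A) :
    φA (tri x a) = ε x * φA a := by
  classical
  set r : Coalgebra.Repr ℂ a (A × A) := ℛ ℂ a with hrdef
  have ha : Rep2 a r.index r.left r.right := r.eq.symm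
  have h1 := LA_aux tri trl hmp φA hφA x a r.index r.left r.right ha
  have h1' : ∑ i ∈ r.index, φA (tri x (r.right i)) * φA (r.left i) = φA (tri x a) := by
    have := congrArg φA h1
    simpa [map_sum, map_smul, smul_eq_mul, hφA.1] using this
  have h2 := hφA.2.1 a r.index r.left r.right ha
  have h2' : ∑ i ∈ r.index, φA (r.left i) * φA (tri x (r.right i)) = φA a * ε x := by
    have := congrArg (φA ∘ₗ tri x) h2
    simp only [map_sum, map_smul, smul_eq_mul, LinearMap.comp_apply] at this
    rw [hmp.compat_one] at this
    simpa [smul_eq_mul, hφA.1] using this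
  rw [← h1']
  calc ∑ i ∈ r.index, φA (tri x (r.right i)) * φA (r.left i)
      = ∑ i ∈ r.index, φA (r.left i) * φA (tri x (r.right i)) :=
        Finset.sum_congr rfl fun i _ => mul_comm _ _
    _ = φA a * ε x := h2'
    _ = ε x * φA a := mul_comm _ _

lemma C1_aux (hmp : IsMatchedPair A H tri trl)
    (φA : A →ₗ[ℂ] ℂ) (hφA : IsNormalIntegral A φA)
    (x : H) (a : A) {ι κ : Type} (s : Finset ι) (t : Finset κ)
    (x1 x2 : ι → H) (a1 a2 : κ → A) (hx : Rep2 x s x1 x2) (ha : Rep2 a t a1 a2) :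
    ∑ i ∈ s, ∑ j ∈ t, φA (tri (x1 i) (a1 j)) • trl (x2 i) (a2 j) = φA a • x := by
  classical
  have hcx : ∑ i ∈ s, ε (x1 i) • x2 i = x :=
    sum_counit_smul_left (⟨s, x1, x2, hx.symm⟩ : Coalgebra.Repr ℂ x ι)
  calc (∑ i ∈ s, ∑ j ∈ t, φA (tri (x1 i) (a1 j)) • trl (x2 i) (a2 j))
      = ∑ j ∈ t, ∑ i ∈ s, φA (a1 j) • (ε (x1 i) • trl (x2 i) (a2 j)) := by
        rw [Finset.sum_comm]
        refine Finset.sum_congr rfl fun j _ => Finset.sum_congr rfl fun i _ => ?_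
        rw [invA tri trl hmp φA hφA, smul_smul, mul_comm]
    _ = ∑ j ∈ t, φA (a1 j) • trl x (a2 j) := by
        refine Finset.sum_congr rfl fun j _ => ?_
        rw [← Finset.smul_sum]
        congr 1
        have := congrArg (trl.flip (a2 j)) hcx
        simpa [map_sum, map_smul, LinearMap.flip_apply] using this
    _ = trl x (∑ j ∈ t, φA (a1 j) • a2 j) := by rw [map_sum]; simp [map_smul]
    _ = φA a • x := by rw [hφA.2.1 a t a1 a2 ha, map_smul, hmp.trl_one_act]

lemma C2_aux (hmp : IsMatchedPair A H tri trl)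
    (φH : H →ₗ[ℂ] ℂ) (hφH : IsNormalIntegral H φH)
    (x : H) (a : A) {ι κ : Type} (s : Finset ι) (t : Finset κ)
    (x1 x2 : ι → H) (a1 a2 : κ → A) (hx : Rep2 x s x1 x2) (ha : Rep2 a t a1 a2) :
    ∑ i ∈ s, ∑ j ∈ t, φH (trl (x2 i) (a2 j)) • tri (x1 i) (a1 j) = φH x • a := by
  classical
  have hca : ∑ j ∈ t, ε (a2 j) • a1 j = a :=
    sum_counit_smul_right (⟨t, a1, a2, ha.symm⟩ : Coalgebra.Repr ℂ a κ)
  calc (∑ i ∈ s, ∑ j ∈ t, φH (trl (x2 i) (a2 j)) • tri (x1 i) (a1 j))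
      = ∑ i ∈ s, ∑ j ∈ t, φH (x2 i) • (ε (a2 j) • tri (x1 i) (a1 j)) := by
        refine Finset.sum_congr rfl fun i _ => Finset.sum_congr rfl fun j _ => ?_
        rw [invH tri trl hmp φH hφH, smul_smul, mul_comm]
    _ = ∑ i ∈ s, φH (x2 i) • tri (x1 i) a := by
        refine Finset.sum_congr rfl fun i _ => ?_
        rw [← Finset.smul_sum]
        congr 1
        have := congrArg (tri (x1 i)) hca
        simpa [map_sum, map_smul] using this
    _ = (tri.flip a) (∑ i ∈ s, φH (x2 i) • x1 i) := by
        rw [map_sum]; simp [map_smul, LinearMap.flip_apply]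
    _ = φH x • a := by
        rw [hφH.2.2 x s x1 x2 hx, map_smul, LinearMap.flip_apply, hmp.tri_one_act]

end MP

lemma sum_sum_smul_tmul {V W : Type} [AddCommGroup V] [Module ℂ V]
    [AddCommGroup W] [Module ℂ W] {ι κ : Type} (s : Finset ι) (t : Finset κ)
    (c : ι → ℂ) (d : κ → ℂ) (u : ι → V) (v : κ → W) :
    ∑ i ∈ s, ∑ j ∈ t, (c i * d j) • (u i ⊗ₜ[ℂ] v j)
      = (∑ i ∈ s, c i • u i) ⊗ₜ[ℂ] (∑ j ∈ t, d j • v j) := by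
  rw [TensorProduct.sum_tmul]
  refine Finset.sum_congr rfl fun i _ => ?_
  rw [TensorProduct.tmul_sum]
  refine Finset.sum_congr rfl fun j _ => ?_
  rw [TensorProduct.tmul_smul, ← TensorProduct.smul_tmul', smul_smul, mul_comm (c i) (d j)]

/-- Let `(A, H, ◁, ▷)` be a matched pair of cosemisimple Hopf algebras with
normal integrals `φ_A` and `φ_H`.  Then the bicrossproduct `A ⋈ H` is cosemisimple: the
functional `φ(a x) = φ_A(a) φ_H(x)` is a normal integral on `A ⋈ H`; moreover
`φ_A(a) φ_H(xy) = ∑ φ_A(x₁ ▷ a₁) φ_H((x₂ ◁ a₂) y)` and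
`φ_A(b a) φ_H(x) = ∑ φ_A(b (x₁ ▷ a₁)) φ_H(x₂ ◁ a₂)` for all `x, y ∈ H`, `a, b ∈ A`. -/
theorem bicrossproduct_normal_integral
    {A H : Type} [Ring A] [HopfAlgebra ℂ A] [Ring H] [HopfAlgebra ℂ H]
    (tri : H →ₗ[ℂ] A →ₗ[ℂ] A) (trl : H →ₗ[ℂ] A →ₗ[ℂ] H)
    (hmp : IsMatchedPair A H tri trl)
    (φA : A →ₗ[ℂ] ℂ) (hφA : IsNormalIntegral A φA)
    (φH : H →ₗ[ℂ] ℂ) (hφH : IsNormalIntegral H φH)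
    (M : Type) [Ring M] [HopfAlgebra ℂ M] (e : A ⊗[ℂ] H ≃ₗ[ℂ] M)
    (hM : IsBicross A H tri trl M e) :
    IsNormalIntegral M
      ((LinearMap.mul' ℂ ℂ) ∘ₗ (TensorProduct.map φA φH) ∘ₗ (e.symm : M →ₗ[ℂ] A ⊗[ℂ] H))
    ∧ (∀ (x y : H) (a : A) {ι κ : Type} (s : Finset ι) (t : Finset κ)
        (x1 x2 : ι → H) (a1 a2 : κ → A), Rep2 x s x1 x2 → Rep2 a t a1 a2 →
        φA a * φH (x * y)
          = ∑ i ∈ s, ∑ j ∈ t, φA (tri (x1 i) (a1 j)) * φH (trl (x2 i) (a2 j) * y))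
    ∧ (∀ (x : H) (a b : A) {ι κ : Type} (s : Finset ι) (t : Finset κ)
        (x1 x2 : ι → H) (a1 a2 : κ → A), Rep2 x s x1 x2 → Rep2 a t a1 a2 →
        φA (b * a) * φH x
          = ∑ i ∈ s, ∑ j ∈ t, φA (b * tri (x1 i) (a1 j)) * φH (trl (x2 i) (a2 j))) := by
  classical
  set φ : M →ₗ[ℂ] ℂ :=
    (LinearMap.mul' ℂ ℂ) ∘ₗ (TensorProduct.map φA φH) ∘ₗ (e.symm : M →ₗ[ℂ] A ⊗[ℂ] H)
    with hφdef
  have hφ_apply : ∀ (a : A) (x : H), φ (e (a ⊗ₜ[ℂ] x)) = φA a * φH x := by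
    intro a x
    simp [hφdef, LinearMap.mul'_apply]
  refine ⟨⟨?_, ?_, ?_⟩, ?_, ?_⟩
  · rw [hM.one_def, hφ_apply, hφA.1, hφH.1, mul_one]
  · -- left integral
    intro m ι s m1 m2 hrep
    set B : M →ₗ[ℂ] M →ₗ[ℂ] M := φ.smulRight (LinearMap.id : M →ₗ[ℂ] M) with hBdef
    have hB : ∀ u v : M, B u v = φ u • v := by intro u v; simp [hBdef]
    have key : ∀ m : M, TensorProduct.lift B (Coalgebra.comul (R := ℂ) m)
        = φ m • (1 : M) := by
      intro m
      rw [← e.apply_symm_apply m]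
      generalize e.symm m = w
      induction w using TensorProduct.induction_on with
      | zero => simp
      | tmul a x =>
        have ra : Coalgebra.Repr ℂ a (A × A) := ℛ ℂ a
        have rx : Coalgebra.Repr ℂ x (H × H) := ℛ ℂ x
        rw [hM.comul_def a x ra.index rx.index ra.left ra.right rx.left rx.right
          ra.eq.symm rx.eq.symm]
        rw [map_sum]
        calc ∑ i ∈ ra.index, TensorProduct.lift B
              (∑ j ∈ rx.index, e (ra.left i ⊗ₜ[ℂ] rx.left j) ⊗ₜ[ℂ] e (ra.right i ⊗ₜ[ℂ] rx.right j))
            = ∑ i ∈ ra.index, ∑ j ∈ rx.index,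
                (φA (ra.left i) * φH (rx.left j)) • e (ra.right i ⊗ₜ[ℂ] rx.right j) := by
              refine Finset.sum_congr rfl fun i _ => ?_
              rw [map_sum]
              refine Finset.sum_congr rfl fun j _ => ?_
              rw [TensorProduct.lift.tmul, hB, hφ_apply]
          _ = e ((∑ i ∈ ra.index, φA (ra.left i) • ra.right i) ⊗ₜ[ℂ]
                (∑ j ∈ rx.index, φH (rx.left j) • rx.right j)) := by
              rw [← sum_sum_smul_tmul, map_sum]
              refine Finset.sum_congr rfl fun i _ => ?_
              rw [map_sum]
              exact Finset.sum_congr rfl fun j _ => (map_smul e _ _).symm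
          _ = (φA a * φH x) • e ((1 : A) ⊗ₜ[ℂ] (1 : H)) := by
              rw [hφA.2.1 a ra.index ra.left ra.right ra.eq.symm,
                hφH.2.1 x rx.index rx.left rx.right rx.eq.symm]
              rw [← TensorProduct.smul_tmul', TensorProduct.tmul_smul, smul_smul, map_smul]
          _ = φ (e (a ⊗ₜ[ℂ] x)) • (1 : M) := by rw [hφ_apply, ← hM.one_def]
      | add u v hu hv => simp only [map_add, hu, hv, add_smul]
    calc ∑ i ∈ s, φ (m1 i) • m2 i
        = TensorProduct.lift B (Coalgebra.comul (R := ℂ) m) := by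
          rw [hrep, map_sum]
          exact (Finset.sum_congr rfl fun i _ => by rw [TensorProduct.lift.tmul, hB]).symm
      _ = φ m • (1 : M) := key m
  · -- right integral
    intro m ι s m1 m2 hrep
    set B : M →ₗ[ℂ] M →ₗ[ℂ] M := (φ.smulRight (LinearMap.id : M →ₗ[ℂ] M)).flip with hBdef
    have hB : ∀ u v : M, B u v = φ v • u := by intro u v; simp [hBdef]
    have key : ∀ m : M, TensorProduct.lift B (Coalgebra.comul (R := ℂ) m)
        = φ m • (1 : M) := by
      intro m
      rw [← e.apply_symm_apply m]
      generalize e.symm m = w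
      induction w using TensorProduct.induction_on with
      | zero => simp
      | tmul a x =>
        have ra : Coalgebra.Repr ℂ a (A × A) := ℛ ℂ a
        have rx : Coalgebra.Repr ℂ x (H × H) := ℛ ℂ x
        rw [hM.comul_def a x ra.index rx.index ra.left ra.right rx.left rx.right
          ra.eq.symm rx.eq.symm]
        rw [map_sum]
        calc ∑ i ∈ ra.index, TensorProduct.lift B
              (∑ j ∈ rx.index, e (ra.left i ⊗ₜ[ℂ] rx.left j) ⊗ₜ[ℂ] e (ra.right i ⊗ₜ[ℂ] rx.right j))
            = ∑ i ∈ ra.index, ∑ j ∈ rx.index,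
                (φA (ra.right i) * φH (rx.right j)) • e (ra.left i ⊗ₜ[ℂ] rx.left j) := by
              refine Finset.sum_congr rfl fun i _ => ?_
              rw [map_sum]
              refine Finset.sum_congr rfl fun j _ => ?_
              rw [TensorProduct.lift.tmul, hB, hφ_apply]
          _ = e ((∑ i ∈ ra.index, φA (ra.right i) • ra.left i) ⊗ₜ[ℂ]
                (∑ j ∈ rx.index, φH (rx.right j) • rx.left j)) := by
              rw [← sum_sum_smul_tmul, map_sum]
              refine Finset.sum_congr rfl fun i _ => ?_
              rw [map_sum]
              exact Finset.sum_congr rfl fun j _ => (map_smul e _ _).symm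
          _ = (φA a * φH x) • e ((1 : A) ⊗ₜ[ℂ] (1 : H)) := by
              rw [hφA.2.2 a ra.index ra.left ra.right ra.eq.symm,
                hφH.2.2 x rx.index rx.left rx.right rx.eq.symm]
              rw [← TensorProduct.smul_tmul', TensorProduct.tmul_smul, smul_smul, map_smul]
          _ = φ (e (a ⊗ₜ[ℂ] x)) • (1 : M) := by rw [hφ_apply, ← hM.one_def]
      | add u v hu hv => simp only [map_add, hu, hv, add_smul]
    calc ∑ i ∈ s, φ (m2 i) • m1 i
        = TensorProduct.lift B (Coalgebra.comul (R := ℂ) m) := by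
          rw [hrep, map_sum]
          exact (Finset.sum_congr rfl fun i _ => by rw [TensorProduct.lift.tmul, hB]).symm
      _ = φ m • (1 : M) := key m
  · -- identity 1
    intro x y a ι κ s t x1 x2 a1 a2 hx ha
    have hC1 := C1_aux tri trl hmp φA hφA x a s t x1 x2 a1 a2 hx ha
    have := congrArg (φH ∘ₗ LinearMap.mulRight ℂ y) hC1
    simp only [map_sum, map_smul, LinearMap.comp_apply, LinearMap.mulRight_apply,
      smul_eq_mul] at this
    exact this.symm
  · -- identity 2
    intro x a b ι κ s t x1 x2 a1 a2 hx ha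
    have hC2 := C2_aux tri trl hmp φH hφH x a s t x1 x2 a1 a2 hx ha
    have := congrArg (φA ∘ₗ LinearMap.mulLeft ℂ b) hC2
    simp only [map_sum, map_smul, LinearMap.comp_apply, LinearMap.mulLeft_apply,
      smul_eq_mul] at this
    calc φA (b * a) * φH x = φH x * φA (b * a) := mul_comm _ _
      _ = ∑ i ∈ s, ∑ j ∈ t, φH (trl (x2 i) (a2 j)) * φA (b * tri (x1 i) (a1 j)) :=
          this.symm
      _ = ∑ i ∈ s, ∑ j ∈ t, φA (b * tri (x1 i) (a1 j)) * φH (trl (x2 i) (a2 j)) :=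
          Finset.sum_congr rfl fun i _ => Finset.sum_congr rfl fun j _ => mul_comm _ _
end
end

section
/- Let (A,H,◁,▷) be a matched pair of Hopf algebras where A and H are *-Hopf algebras. Then there exists a *-Hopf algebra structure on the bicrossproduct A⋈H restricting to the given involutions on A and H (necessarily given by (ax)* = ∑(x₁*▷a₁*)(x₂*◁a₂*)) if and only if for all x ∈ H and a ∈ A: a*ε_H(x*) = ∑(x₂◁a₂)*▷(x₁▷a₁)* and ε_A(a*)x* = ∑(x₂◁a₂)*◁(x₁▷a₁)*. -/
open scoped TensorProduct
open Coalgebra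

noncomputable section

/-- The compatibility conditions (eq:compat-cerito-acciones):
`a* ε_H(x*) = ∑ (x₂ ◁ a₂)* ▷ (x₁ ▷ a₁)*` and `ε_A(a*) x* = ∑ (x₂ ◁ a₂)* ◁ (x₁ ▷ a₁)*`. -/
def MPStarCompat {A H : Type} [Ring A] [HopfAlgebra ℂ A] [Ring H] [HopfAlgebra ℂ H]
    (tri : H →ₗ[ℂ] A →ₗ[ℂ] A) (trl : H →ₗ[ℂ] A →ₗ[ℂ] H)
    (σA : StarHopf A) (σH : StarHopf H) : Prop :=
  (∀ (x : H) (a : A) {ι κ : Type} (s : Finset ι) (t : Finset κ)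
      (x1 x2 : ι → H) (a1 a2 : κ → A), Rep2 x s x1 x2 → Rep2 a t a1 a2 →
      Coalgebra.counit (R := ℂ) (σH.st x) • σA.st a
        = ∑ i ∈ s, ∑ j ∈ t,
            tri (σH.st (trl (x2 i) (a2 j))) (σA.st (tri (x1 i) (a1 j)))) ∧
  (∀ (x : H) (a : A) {ι κ : Type} (s : Finset ι) (t : Finset κ)
      (x1 x2 : ι → H) (a1 a2 : κ → A), Rep2 x s x1 x2 → Rep2 a t a1 a2 →
      Coalgebra.counit (R := ℂ) (σA.st a) • σH.st x
        = ∑ i ∈ s, ∑ j ∈ t,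
            trl (σH.st (trl (x2 i) (a2 j))) (σA.st (tri (x1 i) (a1 j))))

namespace BXP
open TensorProduct LinearMap

section CoalgUtil
variable {X : Type} [AddCommGroup X] [Module ℂ X] [Coalgebra ℂ X] {ι : Type}

lemma rep2_exists (x : X) : ∃ s : Finset (X × X), Rep2 (ι := X × X) x s Prod.fst Prod.snd := by
  obtain ⟨s, hs⟩ := TensorProduct.exists_finset (Coalgebra.comul (R := ℂ) x)
  exact ⟨s, hs⟩

lemma rep2_apply {Y : Type} [AddCommGroup Y] [Module ℂ Y] (F : X ⊗[ℂ] X →ₗ[ℂ] Y)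
    {x : X} {s : Finset ι} {x1 x2 : ι → X} (h : Rep2 x s x1 x2) :
    F (Coalgebra.comul (R := ℂ) x) = ∑ i ∈ s, F (x1 i ⊗ₜ[ℂ] x2 i) := by
  rw [h, map_sum]

lemma rep2_counit_right {x : X} {s : Finset ι} {x1 x2 : ι → X} (h : Rep2 x s x1 x2) :
    ∑ i ∈ s, Coalgebra.counit (R := ℂ) (x1 i) • x2 i = x := by
  have h1 := rep2_apply ((TensorProduct.lid ℂ X).toLinearMap ∘ₗ
      (LinearMap.rTensor X (Coalgebra.counit (R := ℂ)))) h
  simpa [Coalgebra.rTensor_counit_comul] using h1.symm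

lemma rep2_counit_left {x : X} {s : Finset ι} {x1 x2 : ι → X} (h : Rep2 x s x1 x2) :
    ∑ i ∈ s, Coalgebra.counit (R := ℂ) (x2 i) • x1 i = x := by
  have h1 := rep2_apply ((TensorProduct.rid ℂ X).toLinearMap ∘ₗ
      (LinearMap.lTensor X (Coalgebra.counit (R := ℂ)))) h
  simpa [Coalgebra.lTensor_counit_comul] using h1.symm


lemma rep2_eq {X : Type} [AddCommGroup X] [Module ℂ X] [Coalgebra ℂ X] {ι : Type}
    {x : X} {s : Finset ι} {x1 x2 : ι → X} (h : Rep2 x s x1 x2) :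
    Coalgebra.comul (R := ℂ) x = ∑ i ∈ s, x1 i ⊗ₜ[ℂ] x2 i := h


lemma eqv_sum {M N : Type} [AddCommGroup M] [AddCommGroup N] [Module ℂ M] [Module ℂ N]
    (f : M ≃ₗ[ℂ] N) {ι : Type} (s : Finset ι) (g : ι → M) :
    f (∑ i ∈ s, g i) = ∑ i ∈ s, f (g i) :=
  map_sum (f.toLinearMap) g s

end CoalgUtil
end BXP

namespace StarHopf
variable {H : Type} [Ring H] [HopfAlgebra ℂ H] (σ : StarHopf H) {ι : Type}

lemma st_zero : σ.st 0 = 0 := by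
  have h := σ.st_add 0 0
  simp only [add_zero] at h
  exact (add_eq_left.mp h.symm)

/-- `σ.st` as an additive monoid hom. -/
def stHom : H →+ H := AddMonoidHom.mk' σ.st σ.st_add

@[simp] lemma stHom_apply (x : H) : σ.stHom x = σ.st x := rfl

lemma st_sum (s : Finset ι) (f : ι → H) : σ.st (∑ i ∈ s, f i) = ∑ i ∈ s, σ.st (f i) :=
  map_sum σ.stHom f s

lemma st_one : σ.st 1 = 1 := by
  have h := σ.st_antimul (σ.st 1) 1
  rw [mul_one, σ.st_invol, mul_one] at h
  exact h.symm

lemma st_rep2 {x : H} {s : Finset ι} {x1 x2 : ι → H} (h : Rep2 x s x1 x2) :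
    Rep2 (σ.st x) s (fun i => σ.st (x1 i)) (fun i => σ.st (x2 i)) :=
  σ.st_comul x s x1 x2 h

lemma st_counit (x : H) :
    Coalgebra.counit (R := ℂ) (σ.st x) = (starRingEnd ℂ) (Coalgebra.counit (R := ℂ) x) := by
  classical
  obtain ⟨s, hs⟩ := BXP.rep2_exists x
  have stepA : ∑ p ∈ s,
      ((starRingEnd ℂ) (Coalgebra.counit (R := ℂ) (σ.st p.1))) • p.2 = x := by
    have h3 := BXP.rep2_counit_right (σ.st_rep2 hs)
    have h4 := congrArg σ.st h3
    rw [σ.st_sum] at h4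
    simp only [σ.st_smul, σ.st_invol] at h4
    exact h4
  have e1 : ∑ p ∈ s, (starRingEnd ℂ) (Coalgebra.counit (R := ℂ) (σ.st p.1)) *
      Coalgebra.counit (R := ℂ) p.2 = Coalgebra.counit (R := ℂ) x := by
    have h5 := congrArg (Coalgebra.counit (R := ℂ)) stepA
    rw [map_sum] at h5
    simpa [smul_eq_mul] using h5
  have e2 : ∑ p ∈ s, Coalgebra.counit (R := ℂ) p.2 • p.1 = x := BXP.rep2_counit_left hs
  have e3 : (starRingEnd ℂ) (Coalgebra.counit (R := ℂ) (σ.st x))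
      = ∑ p ∈ s, (starRingEnd ℂ) (Coalgebra.counit (R := ℂ) (σ.st p.1)) *
          Coalgebra.counit (R := ℂ) p.2 := by
    calc (starRingEnd ℂ) (Coalgebra.counit (R := ℂ) (σ.st x))
        = (starRingEnd ℂ) (Coalgebra.counit (R := ℂ)
            (σ.st (∑ p ∈ s, Coalgebra.counit (R := ℂ) p.2 • p.1))) := by rw [e2]
      _ = (starRingEnd ℂ) (Coalgebra.counit (R := ℂ)
            (∑ p ∈ s, (starRingEnd ℂ) (Coalgebra.counit (R := ℂ) p.2) • σ.st p.1)) := by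
            rw [σ.st_sum]; simp only [σ.st_smul]
      _ = (starRingEnd ℂ) (∑ p ∈ s, (starRingEnd ℂ) (Coalgebra.counit (R := ℂ) p.2) *
            Coalgebra.counit (R := ℂ) (σ.st p.1)) := by
            rw [map_sum]; simp only [map_smul, smul_eq_mul]
      _ = ∑ p ∈ s, Coalgebra.counit (R := ℂ) p.2 *
            (starRingEnd ℂ) (Coalgebra.counit (R := ℂ) (σ.st p.1)) := by
            rw [map_sum]; simp
      _ = ∑ p ∈ s, (starRingEnd ℂ) (Coalgebra.counit (R := ℂ) (σ.st p.1)) *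
            Coalgebra.counit (R := ℂ) p.2 := by
            exact Finset.sum_congr rfl fun p _ => mul_comm _ _
  have e4 : (starRingEnd ℂ) (Coalgebra.counit (R := ℂ) (σ.st x))
      = Coalgebra.counit (R := ℂ) x := e3.trans e1
  have e5 := congrArg (starRingEnd ℂ) e4
  simpa using e5

end StarHopf
namespace BXP
open TensorProduct LinearMap

variable {A H : Type} [Ring A] [HopfAlgebra ℂ A] [Ring H] [HopfAlgebra ℂ H]

section Reps
variable {ι κ : Type}

lemma rep2_one : Rep2 (ι := ℕ) (1 : H) {0} (fun _ => (1:H)) (fun _ => (1:H)) := by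
  show Coalgebra.comul (R := ℂ) (1:H) = _
  rw [Bialgebra.comul_one]
  simp [Algebra.TensorProduct.one_def]

lemma comulC_rep {x : H} {a : A} {s : Finset ι} {t : Finset κ} {x1 x2 : ι → H} {a1 a2 : κ → A}
    (hx : Rep2 x s x1 x2) (ha : Rep2 a t a1 a2) :
    Coalgebra.comul (R := ℂ) (x ⊗ₜ[ℂ] a)
      = ∑ i ∈ s, ∑ j ∈ t, (x1 i ⊗ₜ[ℂ] a1 j) ⊗ₜ[ℂ] (x2 i ⊗ₜ[ℂ] a2 j) := by
  have h0 : Coalgebra.comul (R := ℂ) (x ⊗ₜ[ℂ] a)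
      = (TensorProduct.tensorTensorTensorComm ℂ H H A A).toLinearMap
        (Coalgebra.comul (R := ℂ) x ⊗ₜ[ℂ] Coalgebra.comul (R := ℂ) a) := by
    simp [TensorProduct.AlgebraTensorModule.tensorTensorTensorComm_eq]
  rw [h0, hx, ha, TensorProduct.sum_tmul, map_sum]
  refine Finset.sum_congr rfl fun i _ => ?_
  rw [TensorProduct.tmul_sum, map_sum]
  refine Finset.sum_congr rfl fun j _ => ?_
  simp

lemma rep2C {x : H} {a : A} {s : Finset ι} {t : Finset κ} {x1 x2 : ι → H} {a1 a2 : κ → A}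
    (hx : Rep2 x s x1 x2) (ha : Rep2 a t a1 a2) :
    Rep2 (ι := ι × κ) (x ⊗ₜ[ℂ] a) (s ×ˢ t)
      (fun p => x1 p.1 ⊗ₜ[ℂ] a1 p.2) (fun p => x2 p.1 ⊗ₜ[ℂ] a2 p.2) := by
  show Coalgebra.comul (R := ℂ) (x ⊗ₜ[ℂ] a) = _
  rw [comulC_rep hx ha, Finset.sum_product]

lemma comulAH_rep {a : A} {x : H} {s : Finset ι} {t : Finset κ} {a1 a2 : ι → A} {x1 x2 : κ → H}
    (ha : Rep2 a s a1 a2) (hx : Rep2 x t x1 x2) :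
    Coalgebra.comul (R := ℂ) (a ⊗ₜ[ℂ] x)
      = ∑ i ∈ s, ∑ j ∈ t, (a1 i ⊗ₜ[ℂ] x1 j) ⊗ₜ[ℂ] (a2 i ⊗ₜ[ℂ] x2 j) := by
  have h0 : Coalgebra.comul (R := ℂ) (a ⊗ₜ[ℂ] x)
      = (TensorProduct.tensorTensorTensorComm ℂ A A H H).toLinearMap
        (Coalgebra.comul (R := ℂ) a ⊗ₜ[ℂ] Coalgebra.comul (R := ℂ) x) := by
    simp [TensorProduct.AlgebraTensorModule.tensorTensorTensorComm_eq]
  rw [h0, ha, hx, TensorProduct.sum_tmul, map_sum]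
  refine Finset.sum_congr rfl fun i _ => ?_
  rw [TensorProduct.tmul_sum, map_sum]
  refine Finset.sum_congr rfl fun j _ => ?_
  simp

end Reps

section Maps
variable (tri : H →ₗ[ℂ] A →ₗ[ℂ] A) (trl : H →ₗ[ℂ] A →ₗ[ℂ] H)
variable (σA : StarHopf A) (σH : StarHopf H)

/-- lifted `▷`. -/
def TT : H ⊗[ℂ] A →ₗ[ℂ] A := TensorProduct.lift tri
/-- lifted `◁`. -/
def LL : H ⊗[ℂ] A →ₗ[ℂ] H := TensorProduct.lift trl

@[simp] lemma TT_tmul (x : H) (a : A) : TT tri (x ⊗ₜ[ℂ] a) = tri x a := rfl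
@[simp] lemma LL_tmul (x : H) (a : A) : LL trl (x ⊗ₜ[ℂ] a) = trl x a := rfl

/-- conjugated `▷`: `(y, b) ↦ (y* ▷ b*)*`. -/
def TP : H ⊗[ℂ] A →ₗ[ℂ] A := TensorProduct.lift <| LinearMap.mk₂ ℂ
  (fun y b => σA.st (tri (σH.st y) (σA.st b)))
  (fun y y' b => by simp [σH.st_add, σA.st_add, map_add])
  (fun c y b => by simp only [σH.st_smul, σA.st_smul, map_smul, LinearMap.smul_apply, Complex.conj_conj])
  (fun y b b' => by simp [σA.st_add, map_add])
  (fun c y b => by simp only [σH.st_smul, σA.st_smul, map_smul, LinearMap.smul_apply, Complex.conj_conj])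

/-- conjugated `◁`: `(y, b) ↦ (y* ◁ b*)*`. -/
def LP : H ⊗[ℂ] A →ₗ[ℂ] H := TensorProduct.lift <| LinearMap.mk₂ ℂ
  (fun y b => σH.st (trl (σH.st y) (σA.st b)))
  (fun y y' b => by simp [σH.st_add, σA.st_add, map_add])
  (fun c y b => by simp only [σH.st_smul, σA.st_smul, map_smul, LinearMap.smul_apply, Complex.conj_conj])
  (fun y b b' => by simp [σA.st_add, σH.st_add, map_add])
  (fun c y b => by simp only [σH.st_smul, σA.st_smul, map_smul, LinearMap.smul_apply, Complex.conj_conj])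

@[simp] lemma TP_tmul (y : H) (b : A) :
    TP tri σA σH (y ⊗ₜ[ℂ] b) = σA.st (tri (σH.st y) (σA.st b)) := rfl
@[simp] lemma LP_tmul (y : H) (b : A) :
    LP trl σA σH (y ⊗ₜ[ℂ] b) = σH.st (trl (σH.st y) (σA.st b)) := rfl

/-- the conjugation `x ⊗ a ↦ x* ⊗ a*` on `H ⊗ A`, as an additive map. -/
def stC : H ⊗[ℂ] A →+ H ⊗[ℂ] A :=
  TensorProduct.liftAddHom
    (AddMonoidHom.mk' (fun x => AddMonoidHom.mk' (fun a => σH.st x ⊗ₜ[ℂ] σA.st a)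
        (fun a b => by simp [σA.st_add, TensorProduct.tmul_add]))
      (fun x y => by ext a; simp [σH.st_add, TensorProduct.add_tmul]))
    (fun c x a => by
      simp only [AddMonoidHom.mk'_apply, σH.st_smul, σA.st_smul]
      rw [TensorProduct.smul_tmul])

@[simp] lemma stC_tmul (x : H) (a : A) : stC σA σH (x ⊗ₜ[ℂ] a) = σH.st x ⊗ₜ[ℂ] σA.st a := rfl

end Maps
end BXP
namespace BXP
open TensorProduct LinearMap

variable {A H : Type} [Ring A] [HopfAlgebra ℂ A] [Ring H] [HopfAlgebra ℂ H]
variable {tri : H →ₗ[ℂ] A →ₗ[ℂ] A} {trl : H →ₗ[ℂ] A →ₗ[ℂ] H}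
variable {M : Type} [Ring M] [HopfAlgebra ℂ M]

section MLemmas
variable (e : A ⊗[ℂ] H ≃ₗ[ℂ] M)

/-- `a ↦ e (a ⊗ 1)`. -/
def eAm : A →ₗ[ℂ] M := e.toLinearMap ∘ₗ ((TensorProduct.mk ℂ A H).flip 1)
/-- `x ↦ e (1 ⊗ x)`. -/
def eHm : H →ₗ[ℂ] M := e.toLinearMap ∘ₗ (TensorProduct.mk ℂ A H 1)

@[simp] lemma eAm_apply (a : A) : eAm e a = e (a ⊗ₜ[ℂ] 1) := rfl
@[simp] lemma eHm_apply (x : H) : eHm e x = e ((1:A) ⊗ₜ[ℂ] x) := rfl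

/-- `x ⊗ a ↦ e(1 ⊗ x) e(a ⊗ 1)`. -/
def uM : H ⊗[ℂ] A →ₗ[ℂ] M := (LinearMap.mul' ℂ M) ∘ₗ (TensorProduct.map (eHm e) (eAm e))

@[simp] lemma uM_tmul (x : H) (a : A) :
    uM e (x ⊗ₜ[ℂ] a) = e ((1:A) ⊗ₜ[ℂ] x) * e (a ⊗ₜ[ℂ] (1:H)) := by
  simp [uM, LinearMap.mul'_apply]

/-- `x ⊗ a ↦ e(a ⊗ x)`. -/
def vM : H ⊗[ℂ] A →ₗ[ℂ] M := e.toLinearMap ∘ₗ (TensorProduct.comm ℂ H A).toLinearMap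

@[simp] lemma vM_tmul (x : H) (a : A) : vM e (x ⊗ₜ[ℂ] a) = e (a ⊗ₜ[ℂ] x) := rfl

variable {e}
variable (hmp : IsMatchedPair A H tri trl) (hM : IsBicross A H tri trl M e)
include hmp hM

lemma m1 (a b : A) : e (a ⊗ₜ[ℂ] 1) * e (b ⊗ₜ[ℂ] 1) = e ((a*b) ⊗ₜ[ℂ] 1) := by
  obtain ⟨t, hb⟩ := rep2_exists b
  rw [hM.mul_def a b 1 1 {0} t _ _ _ _ rep2_one hb, Finset.sum_singleton]
  have step : ∀ p ∈ t, e ((a * tri 1 p.1) ⊗ₜ[ℂ] (trl 1 p.2 * 1))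
      = Coalgebra.counit (R := ℂ) p.2 • ((eAm e ∘ₗ LinearMap.mulLeft ℂ a) p.1) := by
    intro p _
    rw [hmp.tri_one_act, hmp.compat_one', smul_mul_assoc, one_mul, tmul_smul, map_smul]
    rfl
  rw [Finset.sum_congr rfl step]
  have h2 : ∑ p ∈ t, Coalgebra.counit (R := ℂ) p.2 • ((eAm e ∘ₗ LinearMap.mulLeft ℂ a) p.1)
      = (eAm e ∘ₗ LinearMap.mulLeft ℂ a) (∑ p ∈ t, Coalgebra.counit (R := ℂ) p.2 • p.1) := by
    rw [map_sum]
    exact Finset.sum_congr rfl fun p _ => (map_smul _ _ _).symm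
  rw [h2, rep2_counit_left hb]
  simp

lemma m2 (x y : H) : e ((1:A) ⊗ₜ[ℂ] x) * e ((1:A) ⊗ₜ[ℂ] y) = e ((1:A) ⊗ₜ[ℂ] (x*y)) := by
  obtain ⟨s, hx⟩ := rep2_exists x
  rw [hM.mul_def 1 1 x y s {0} _ _ _ _ hx rep2_one]
  have step : ∀ p ∈ s, (∑ _j ∈ ({0} : Finset ℕ),
        e ((1 * tri p.1 1) ⊗ₜ[ℂ] (trl p.2 1 * y)))
      = Coalgebra.counit (R := ℂ) p.1 • ((eHm e ∘ₗ LinearMap.mulRight ℂ y) p.2) := by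
    intro p _
    rw [Finset.sum_singleton, hmp.compat_one, hmp.trl_one_act, mul_smul_one]
    rw [smul_tmul, tmul_smul, map_smul]
    rfl
  rw [Finset.sum_congr rfl step]
  have h2 : ∑ p ∈ s, Coalgebra.counit (R := ℂ) p.1 • ((eHm e ∘ₗ LinearMap.mulRight ℂ y) p.2)
      = (eHm e ∘ₗ LinearMap.mulRight ℂ y) (∑ p ∈ s, Coalgebra.counit (R := ℂ) p.1 • p.2) := by
    rw [map_sum]
    exact Finset.sum_congr rfl fun p _ => (map_smul _ _ _).symm
  rw [h2, rep2_counit_right hx]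
  simp

lemma m3 (a : A) (y : H) : e (a ⊗ₜ[ℂ] 1) * e ((1:A) ⊗ₜ[ℂ] y) = e (a ⊗ₜ[ℂ] y) := by
  rw [hM.mul_def a 1 1 y {0} {0} _ _ _ _ rep2_one rep2_one]
  simp [hmp.tri_one_act, hmp.trl_one_act]

lemma u_eq : uM e = e.toLinearMap ∘ₗ (TensorProduct.map (TT tri) (LL trl)) ∘ₗ
    (Coalgebra.comul (R := ℂ) (A := H ⊗[ℂ] A)) := by
  apply TensorProduct.ext'
  intro x a
  obtain ⟨s, hx⟩ := rep2_exists x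
  obtain ⟨t, ha⟩ := rep2_exists a
  have lhs : uM e (x ⊗ₜ[ℂ] a) = ∑ p ∈ s, ∑ q ∈ t,
      e ((tri p.1 q.1) ⊗ₜ[ℂ] (trl p.2 q.2)) := by
    rw [uM_tmul, hM.mul_def 1 a x 1 s t _ _ _ _ hx ha]
    exact Finset.sum_congr rfl fun p _ => Finset.sum_congr rfl fun q _ => by
      rw [one_mul, mul_one]
  rw [lhs]
  simp only [LinearMap.comp_apply]
  rw [comulC_rep hx ha, map_sum, map_sum]
  refine Finset.sum_congr rfl fun p _ => ?_
  rw [map_sum, map_sum]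
  refine Finset.sum_congr rfl fun q _ => ?_
  simp

lemma comul_e (w : A ⊗[ℂ] H) :
    Coalgebra.comul (R := ℂ) (e w)
      = (TensorProduct.map e.toLinearMap e.toLinearMap) (Coalgebra.comul (R := ℂ) w) := by
  have key : (Coalgebra.comul (R := ℂ) (A := M)) ∘ₗ e.toLinearMap
      = (TensorProduct.map e.toLinearMap e.toLinearMap) ∘ₗ
        (Coalgebra.comul (R := ℂ) (A := A ⊗[ℂ] H)) := by
    apply TensorProduct.ext'
    intro p q
    obtain ⟨s, hp⟩ := rep2_exists p
    obtain ⟨t, hq⟩ := rep2_exists q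
    simp only [LinearMap.comp_apply, LinearEquiv.coe_coe]
    rw [hM.comul_def p q s t _ _ _ _ hp hq, comulAH_rep hp hq, map_sum]
    refine Finset.sum_congr rfl fun i _ => ?_
    rw [map_sum]
    refine Finset.sum_congr rfl fun j _ => ?_
    simp
  exact LinearMap.congr_fun key w

lemma master1 : (Coalgebra.comul (R := ℂ) (A := M)) ∘ₗ uM e
    = (TensorProduct.map (uM e) (uM e)) ∘ₗ (Coalgebra.comul (R := ℂ) (A := H ⊗[ℂ] A)) := by
  apply TensorProduct.ext'
  intro x a
  obtain ⟨s, hx⟩ := rep2_exists x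
  obtain ⟨t, ha⟩ := rep2_exists a
  simp only [LinearMap.comp_apply, uM_tmul]
  rw [Bialgebra.comul_mul]
  have hx' : Coalgebra.comul (R := ℂ) (e ((1:A) ⊗ₜ[ℂ] x))
      = ∑ p ∈ s, e ((1:A) ⊗ₜ[ℂ] p.1) ⊗ₜ[ℂ] e ((1:A) ⊗ₜ[ℂ] p.2) := by
    rw [comul_e hmp hM, comulAH_rep rep2_one hx, Finset.sum_singleton, map_sum]
    exact Finset.sum_congr rfl fun p _ => by simp
  have ha' : Coalgebra.comul (R := ℂ) (e (a ⊗ₜ[ℂ] (1:H)))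
      = ∑ q ∈ t, e (q.1 ⊗ₜ[ℂ] (1:H)) ⊗ₜ[ℂ] e (q.2 ⊗ₜ[ℂ] (1:H)) := by
    rw [comul_e hmp hM, comulAH_rep ha rep2_one, map_sum]
    refine Finset.sum_congr rfl fun q _ => by rw [Finset.sum_singleton]; simp
  rw [hx', ha', Finset.sum_mul_sum]
  rw [comulC_rep hx ha, map_sum]
  refine Finset.sum_congr rfl fun p _ => ?_
  rw [map_sum]
  refine Finset.sum_congr rfl fun q _ => ?_
  rw [Algebra.TensorProduct.tmul_mul_tmul]
  simp
end MLemmas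
end BXP
namespace BXP
open TensorProduct LinearMap

lemma ttc_nat {P Q R S P' Q' R' S' : Type}
    [AddCommGroup P] [AddCommGroup Q] [AddCommGroup R] [AddCommGroup S]
    [AddCommGroup P'] [AddCommGroup Q'] [AddCommGroup R'] [AddCommGroup S']
    [Module ℂ P] [Module ℂ Q] [Module ℂ R] [Module ℂ S]
    [Module ℂ P'] [Module ℂ Q'] [Module ℂ R'] [Module ℂ S']
    (f₁ : P →ₗ[ℂ] P') (f₂ : Q →ₗ[ℂ] Q') (g₁ : R →ₗ[ℂ] R') (g₂ : S →ₗ[ℂ] S') :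
    (TensorProduct.tensorTensorTensorComm ℂ P' Q' R' S').toLinearMap ∘ₗ
      (TensorProduct.map (TensorProduct.map f₁ f₂) (TensorProduct.map g₁ g₂))
    = (TensorProduct.map (TensorProduct.map f₁ g₁) (TensorProduct.map f₂ g₂)) ∘ₗ
      (TensorProduct.tensorTensorTensorComm ℂ P Q R S).toLinearMap := by
  apply TensorProduct.ext_fourfold'
  intro p q r s
  simp

lemma ext_mid {P Q R S V : Type} [AddCommGroup P] [AddCommGroup Q] [AddCommGroup R]
    [AddCommGroup S] [AddCommGroup V] [Module ℂ P] [Module ℂ Q] [Module ℂ R] [Module ℂ S]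
    [Module ℂ V]
    {φ ψ : P ⊗[ℂ] ((Q ⊗[ℂ] R) ⊗[ℂ] S) →ₗ[ℂ] V}
    (hext : ∀ (p : P) (q : Q) (r : R) (s : S),
      φ (p ⊗ₜ[ℂ] ((q ⊗ₜ[ℂ] r) ⊗ₜ[ℂ] s)) = ψ (p ⊗ₜ[ℂ] ((q ⊗ₜ[ℂ] r) ⊗ₜ[ℂ] s))) : φ = ψ := by
  apply TensorProduct.ext'
  intro p w
  induction w using TensorProduct.induction_on with
  | zero => simp
  | add u v hu hv => rw [TensorProduct.tmul_add, map_add, map_add, hu, hv]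
  | tmul z s =>
    induction z using TensorProduct.induction_on with
    | zero => simp
    | add u v hu hv =>
        rw [TensorProduct.add_tmul, TensorProduct.tmul_add, map_add, map_add, hu, hv]
    | tmul q r => exact hext p q r s

variable {A H : Type} [Ring A] [HopfAlgebra ℂ A] [Ring H] [HopfAlgebra ℂ H]

section CMaps
variable (tri : H →ₗ[ℂ] A →ₗ[ℂ] A) (trl : H →ₗ[ℂ] A →ₗ[ℂ] H)
variable (σA : StarHopf A) (σH : StarHopf H)

/-- `(L' ⊗ T')`. -/
def mP : (H ⊗[ℂ] A) ⊗[ℂ] (H ⊗[ℂ] A) →ₗ[ℂ] H ⊗[ℂ] A :=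
  TensorProduct.map (LP trl σA σH) (TP tri σA σH)

@[simp] lemma mP_tmul (w w' : H ⊗[ℂ] A) :
    mP tri trl σA σH (w ⊗ₜ[ℂ] w') = LP trl σA σH w ⊗ₜ[ℂ] TP tri σA σH w' := rfl

/-- the candidate coalgebra endomorphism `g = (L' ⊗ T') ∘ flip ∘ Δ`. -/
def gM : H ⊗[ℂ] A →ₗ[ℂ] H ⊗[ℂ] A :=
  mP tri trl σA σH ∘ₗ (TensorProduct.comm ℂ (H ⊗[ℂ] A) (H ⊗[ℂ] A)).toLinearMap ∘ₗ
    Coalgebra.comul (R := ℂ)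

/-- `x ⊗ a ↦ ε(x) • a`. -/
def cAm : H ⊗[ℂ] A →ₗ[ℂ] A :=
  (TensorProduct.lid ℂ A).toLinearMap ∘ₗ
    (LinearMap.rTensor A (Coalgebra.counit (R := ℂ) (A := H)))

/-- `x ⊗ a ↦ ε(a) • x`. -/
def cHm : H ⊗[ℂ] A →ₗ[ℂ] H :=
  (TensorProduct.rid ℂ H).toLinearMap ∘ₗ
    (LinearMap.lTensor H (Coalgebra.counit (R := ℂ) (A := A)))

@[simp] lemma cAm_tmul (x : H) (a : A) :
    cAm (x ⊗ₜ[ℂ] a) = Coalgebra.counit (R := ℂ) x • a := by simp [cAm]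
@[simp] lemma cHm_tmul (x : H) (a : A) :
    cHm (x ⊗ₜ[ℂ] a) = Coalgebra.counit (R := ℂ) a • x := by simp [cHm]

variable {tri trl}

lemma rep2_tri (hmp : IsMatchedPair A H tri trl) {ι κ : Type} {x : H} {a : A}
    {s : Finset ι} {t : Finset κ} {x1 x2 : ι → H} {a1 a2 : κ → A}
    (hx : Rep2 x s x1 x2) (ha : Rep2 a t a1 a2) :
    Rep2 (ι := ι × κ) (tri x a) (s ×ˢ t)
      (fun p => tri (x1 p.1) (a1 p.2)) (fun p => tri (x2 p.1) (a2 p.2)) := by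
  show Coalgebra.comul (R := ℂ) (tri x a) = _
  rw [hmp.tri_comul x a s t x1 x2 a1 a2 hx ha, Finset.sum_product]

lemma rep2_trl (hmp : IsMatchedPair A H tri trl) {ι κ : Type} {x : H} {a : A}
    {s : Finset ι} {t : Finset κ} {x1 x2 : ι → H} {a1 a2 : κ → A}
    (hx : Rep2 x s x1 x2) (ha : Rep2 a t a1 a2) :
    Rep2 (ι := ι × κ) (trl x a) (s ×ˢ t)
      (fun p => trl (x1 p.1) (a1 p.2)) (fun p => trl (x2 p.1) (a2 p.2)) := by
  show Coalgebra.comul (R := ℂ) (trl x a) = _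
  rw [hmp.trl_comul x a s t x1 x2 a1 a2 hx ha, Finset.sum_product]

lemma ctP (hmp : IsMatchedPair A H tri trl) :
    (Coalgebra.comul (R := ℂ) (A := A)) ∘ₗ TP tri σA σH
      = (TensorProduct.map (TP tri σA σH) (TP tri σA σH)) ∘ₗ
        (Coalgebra.comul (R := ℂ) (A := H ⊗[ℂ] A)) := by
  apply TensorProduct.ext'
  intro x a
  obtain ⟨s, hx⟩ := rep2_exists x
  obtain ⟨t, ha⟩ := rep2_exists a
  simp only [LinearMap.comp_apply, TP_tmul]
  rw [rep2_eq (σA.st_rep2 (rep2_tri hmp (σH.st_rep2 hx) (σA.st_rep2 ha)))]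
  rw [comulC_rep hx ha, map_sum, Finset.sum_product]
  refine Finset.sum_congr rfl fun i _ => ?_
  rw [map_sum]
  exact Finset.sum_congr rfl fun j _ => by simp

lemma clP (hmp : IsMatchedPair A H tri trl) :
    (Coalgebra.comul (R := ℂ) (A := H)) ∘ₗ LP trl σA σH
      = (TensorProduct.map (LP trl σA σH) (LP trl σA σH)) ∘ₗ
        (Coalgebra.comul (R := ℂ) (A := H ⊗[ℂ] A)) := by
  apply TensorProduct.ext'
  intro x a
  obtain ⟨s, hx⟩ := rep2_exists x
  obtain ⟨t, ha⟩ := rep2_exists a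
  simp only [LinearMap.comp_apply, LP_tmul]
  rw [rep2_eq (σH.st_rep2 (rep2_trl hmp (σH.st_rep2 hx) (σA.st_rep2 ha)))]
  rw [comulC_rep hx ha, map_sum, Finset.sum_product]
  refine Finset.sum_congr rfl fun i _ => ?_
  rw [map_sum]
  exact Finset.sum_congr rfl fun j _ => by simp

lemma symP (hmp : IsMatchedPair A H tri trl) :
    mP tri trl σA σH ∘ₗ (Coalgebra.comul (R := ℂ) (A := H ⊗[ℂ] A))
      = mP tri trl σA σH ∘ₗ (TensorProduct.comm ℂ (H ⊗[ℂ] A) (H ⊗[ℂ] A)).toLinearMap ∘ₗ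
        (Coalgebra.comul (R := ℂ) (A := H ⊗[ℂ] A)) := by
  apply TensorProduct.ext'
  intro x a
  obtain ⟨s, hx⟩ := rep2_exists x
  obtain ⟨t, ha⟩ := rep2_exists a
  simp only [LinearMap.comp_apply, LinearEquiv.coe_coe]
  rw [comulC_rep hx ha]
  have hsym := hmp.compat_sym (σH.st x) (σA.st a) s t _ _ _ _ (σH.st_rep2 hx) (σA.st_rep2 ha)
  have lhs : mP tri trl σA σH (∑ i ∈ s, ∑ j ∈ t,
        (i.1 ⊗ₜ[ℂ] j.1) ⊗ₜ[ℂ] (i.2 ⊗ₜ[ℂ] j.2))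
      = stC σA σH (∑ i ∈ s, ∑ j ∈ t,
          trl (σH.st i.1) (σA.st j.1) ⊗ₜ[ℂ] tri (σH.st i.2) (σA.st j.2)) := by
    rw [map_sum, map_sum]
    refine Finset.sum_congr rfl fun i _ => ?_
    rw [map_sum, map_sum]
    exact Finset.sum_congr rfl fun j _ => by simp
  have rhs : mP tri trl σA σH ((TensorProduct.comm ℂ (H ⊗[ℂ] A) (H ⊗[ℂ] A))
        (∑ i ∈ s, ∑ j ∈ t, (i.1 ⊗ₜ[ℂ] j.1) ⊗ₜ[ℂ] (i.2 ⊗ₜ[ℂ] j.2)))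
      = stC σA σH (∑ i ∈ s, ∑ j ∈ t,
          trl (σH.st i.2) (σA.st j.2) ⊗ₜ[ℂ] tri (σH.st i.1) (σA.st j.1)) := by
    rw [eqv_sum, map_sum, map_sum]
    refine Finset.sum_congr rfl fun i _ => ?_
    rw [eqv_sum, map_sum, map_sum]
    exact Finset.sum_congr rfl fun j _ => by simp
  rw [lhs, rhs]
  exact congrArg (stC σA σH) hsym

lemma condT (hmp : IsMatchedPair A H tri trl) (hc : MPStarCompat tri trl σA σH) :
    TT tri ∘ₗ gM tri trl σA σH = cAm := by
  apply TensorProduct.ext'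
  intro x a
  obtain ⟨s, hx⟩ := rep2_exists x
  obtain ⟨t, ha⟩ := rep2_exists a
  simp only [LinearMap.comp_apply, gM, cAm_tmul, LinearEquiv.coe_coe]
  rw [comulC_rep hx ha]
  have hc1 := hc.1 (σH.st x) (σA.st a) s t _ _ _ _ (σH.st_rep2 hx) (σA.st_rep2 ha)
  rw [σH.st_invol, σA.st_invol] at hc1
  rw [hc1, eqv_sum, map_sum, map_sum]
  refine Finset.sum_congr rfl fun i _ => ?_
  rw [eqv_sum, map_sum, map_sum]
  exact Finset.sum_congr rfl fun j _ => by simp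

lemma condL (hmp : IsMatchedPair A H tri trl) (hc : MPStarCompat tri trl σA σH) :
    LL trl ∘ₗ gM tri trl σA σH = cHm := by
  apply TensorProduct.ext'
  intro x a
  obtain ⟨s, hx⟩ := rep2_exists x
  obtain ⟨t, ha⟩ := rep2_exists a
  simp only [LinearMap.comp_apply, gM, cHm_tmul, LinearEquiv.coe_coe]
  rw [comulC_rep hx ha]
  have hc2 := hc.2 (σH.st x) (σA.st a) s t _ _ _ _ (σH.st_rep2 hx) (σA.st_rep2 ha)
  rw [σH.st_invol, σA.st_invol] at hc2
  rw [hc2, eqv_sum, map_sum, map_sum]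
  refine Finset.sum_congr rfl fun i _ => ?_
  rw [eqv_sum, map_sum, map_sum]
  exact Finset.sum_congr rfl fun j _ => by simp

lemma collapse :
    (TensorProduct.map cAm cHm) ∘ₗ (Coalgebra.comul (R := ℂ) (A := H ⊗[ℂ] A))
      = (TensorProduct.comm ℂ H A).toLinearMap := by
  apply TensorProduct.ext'
  intro x a
  obtain ⟨s, hx⟩ := rep2_exists x
  obtain ⟨t, ha⟩ := rep2_exists a
  simp only [LinearMap.comp_apply, LinearEquiv.coe_coe, TensorProduct.comm_tmul]
  rw [comulC_rep hx ha, map_sum]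
  have step1 : ∀ i ∈ s, (TensorProduct.map cAm cHm)
        (∑ j ∈ t, ((i.1 : H) ⊗ₜ[ℂ] (j.1 : A)) ⊗ₜ[ℂ] (i.2 ⊗ₜ[ℂ] j.2))
      = Coalgebra.counit (R := ℂ) i.1 • (a ⊗ₜ[ℂ] i.2) := by
    intro i _
    rw [map_sum]
    have h2 : ∀ j ∈ t, (TensorProduct.map cAm cHm) (((i.1 : H) ⊗ₜ[ℂ] (j.1 : A)) ⊗ₜ[ℂ] (i.2 ⊗ₜ[ℂ] j.2))
        = Coalgebra.counit (R := ℂ) i.1 •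
            ((Coalgebra.counit (R := ℂ) j.2 • j.1) ⊗ₜ[ℂ] i.2) := by
      intro j _
      simp only [TensorProduct.map_tmul, cAm_tmul, cHm_tmul]
      rw [TensorProduct.smul_tmul', TensorProduct.tmul_smul, TensorProduct.smul_tmul']
      rw [smul_comm]
    rw [Finset.sum_congr rfl h2, ← Finset.smul_sum]
    congr 1
    rw [← TensorProduct.sum_tmul, rep2_counit_left ha]
  rw [Finset.sum_congr rfl step1]
  have h3 : ∑ i ∈ s, Coalgebra.counit (R := ℂ) i.1 • (a ⊗ₜ[ℂ] i.2)
      = a ⊗ₜ[ℂ] (∑ i ∈ s, Coalgebra.counit (R := ℂ) i.1 • i.2) := by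
    rw [TensorProduct.tmul_sum]
    exact Finset.sum_congr rfl fun i _ => by rw [TensorProduct.tmul_smul]
  rw [h3, rep2_counit_right hx]

lemma n1 (hmp : IsMatchedPair A H tri trl) :
    (Coalgebra.comul (R := ℂ) (A := H ⊗[ℂ] A)) ∘ₗ mP tri trl σA σH
      = (TensorProduct.map (mP tri trl σA σH) (mP tri trl σA σH)) ∘ₗ
        (TensorProduct.tensorTensorTensorComm ℂ (H ⊗[ℂ] A) (H ⊗[ℂ] A)
          (H ⊗[ℂ] A) (H ⊗[ℂ] A)).toLinearMap ∘ₗ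
        (TensorProduct.map (Coalgebra.comul (R := ℂ)) (Coalgebra.comul (R := ℂ))) := by
  apply TensorProduct.ext'
  intro w w'
  simp only [LinearMap.comp_apply, mP_tmul, TensorProduct.map_tmul, LinearEquiv.coe_coe]
  have h0 : Coalgebra.comul (R := ℂ) (LP trl σA σH w ⊗ₜ[ℂ] TP tri σA σH w')
      = (TensorProduct.tensorTensorTensorComm ℂ H H A A).toLinearMap
        ((Coalgebra.comul (R := ℂ) (LP trl σA σH w)) ⊗ₜ[ℂ]
          (Coalgebra.comul (R := ℂ) (TP tri σA σH w'))) := by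
    simp [TensorProduct.AlgebraTensorModule.tensorTensorTensorComm_eq]
  have hw := LinearMap.congr_fun (clP σA σH hmp) w
  have hw' := LinearMap.congr_fun (ctP σA σH hmp) w'
  simp only [LinearMap.comp_apply] at hw hw'
  rw [h0, hw, hw']
  have h1 := LinearMap.congr_fun (ttc_nat (LP trl σA σH) (LP trl σA σH)
      (TP tri σA σH) (TP tri σA σH))
      ((Coalgebra.comul (R := ℂ) w) ⊗ₜ[ℂ] (Coalgebra.comul (R := ℂ) w'))
  simp only [LinearMap.comp_apply, TensorProduct.map_tmul] at h1
  exact h1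

end CMaps
end BXP
namespace BXP
open TensorProduct LinearMap

variable {A H : Type} [Ring A] [HopfAlgebra ℂ A] [Ring H] [HopfAlgebra ℂ H]

section Crux
variable (tri : H →ₗ[ℂ] A →ₗ[ℂ] A) (trl : H →ₗ[ℂ] A →ₗ[ℂ] H)
variable (σA : StarHopf A) (σH : StarHopf H)

local notation "C'" => H ⊗[ℂ] A
local notation "Δc" => Coalgebra.comul (R := ℂ) (A := H ⊗[ℂ] A)

/-- `d₁ ⊗ ((m₁ ⊗ m₂) ⊗ d₃) ↦ (d₁ ⊗ m₁) ⊗ (m₂ ⊗ d₃)`. -/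
def psiS : C' ⊗[ℂ] ((C' ⊗[ℂ] C') ⊗[ℂ] C') →ₗ[ℂ] (C' ⊗[ℂ] C') ⊗[ℂ] (C' ⊗[ℂ] C') :=
  (TensorProduct.assoc ℂ C' C' (C' ⊗[ℂ] C')).symm.toLinearMap ∘ₗ
    (LinearMap.lTensor C' (TensorProduct.assoc ℂ C' C' C').toLinearMap)

@[simp] lemma psiS_tmul (d1 m1 m2 d3 : C') :
    psiS (d1 ⊗ₜ[ℂ] ((m1 ⊗ₜ[ℂ] m2) ⊗ₜ[ℂ] d3)) = (d1 ⊗ₜ[ℂ] m1) ⊗ₜ[ℂ] (m2 ⊗ₜ[ℂ] d3) := by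
  simp [psiS]

/-- the three-step comultiplication with the middle leg split last. -/
def D3 : C' →ₗ[ℂ] C' ⊗[ℂ] ((C' ⊗[ℂ] C') ⊗[ℂ] C') :=
  (LinearMap.lTensor C' (LinearMap.rTensor C' Δc)) ∘ₗ (LinearMap.lTensor C' Δc) ∘ₗ Δc

lemma a4nat (V : (C' ⊗[ℂ] C') ⊗[ℂ] C') :
    (TensorProduct.assoc ℂ C' C' (C' ⊗[ℂ] C')) ((LinearMap.lTensor (C' ⊗[ℂ] C') Δc) V)
      = (LinearMap.lTensor C' (LinearMap.lTensor C' Δc))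
          ((TensorProduct.assoc ℂ C' C' C') V) := by
  have h : (TensorProduct.assoc ℂ C' C' (C' ⊗[ℂ] C')).toLinearMap ∘ₗ
        (LinearMap.lTensor (C' ⊗[ℂ] C') Δc)
      = (LinearMap.lTensor C' (LinearMap.lTensor C' Δc)) ∘ₗ
        (TensorProduct.assoc ℂ C' C' C').toLinearMap := by
    apply TensorProduct.ext_threefold
    intro p q r
    simp
  exact LinearMap.congr_fun h V

lemma shuffle (w : C') :
    (TensorProduct.map Δc Δc) (Δc w) = psiS (D3 w) := by
  have hco : (TensorProduct.assoc ℂ C' C' C').toLinearMap ∘ₗ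
        (LinearMap.rTensor C' Δc) ∘ₗ Δc = (LinearMap.lTensor C' Δc) ∘ₗ Δc :=
    Coalgebra.coassoc
  have h1 : psiS (D3 w)
      = (TensorProduct.assoc ℂ C' C' (C' ⊗[ℂ] C')).symm
          ((LinearMap.lTensor C' (LinearMap.lTensor C' Δc))
            ((LinearMap.lTensor C' Δc) (Δc w))) := by
    simp only [psiS, D3, LinearMap.comp_apply, LinearEquiv.coe_coe]
    congr 1
    have merge : (LinearMap.lTensor C' (TensorProduct.assoc ℂ C' C' C').toLinearMap) ∘ₗ
          (LinearMap.lTensor C' (LinearMap.rTensor C' Δc)) ∘ₗ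
          (LinearMap.lTensor C' Δc)
        = (LinearMap.lTensor C' (LinearMap.lTensor C' Δc)) ∘ₗ
          (LinearMap.lTensor C' Δc) := by
      rw [← LinearMap.lTensor_comp, ← LinearMap.lTensor_comp, ← LinearMap.lTensor_comp, hco]
    exact LinearMap.congr_fun merge (Δc w)
  have h2 : (TensorProduct.map Δc Δc) (Δc w)
      = (LinearMap.lTensor (C' ⊗[ℂ] C') Δc) ((LinearMap.rTensor C' Δc) (Δc w)) := by
    rw [← LinearMap.comp_apply (LinearMap.lTensor (C' ⊗[ℂ] C') Δc)
      (LinearMap.rTensor C' Δc), LinearMap.lTensor_comp_rTensor]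
  have h3 : (LinearMap.lTensor C' Δc) (Δc w)
      = (TensorProduct.assoc ℂ C' C' C') ((LinearMap.rTensor C' Δc) (Δc w)) :=
    (Coalgebra.coassoc_apply w).symm
  rw [h1, h3, ← a4nat, LinearEquiv.symm_apply_apply]
  exact h2

/-- the composite giving the left-hand side of the middle-flip identity. -/
def Q1 : C' ⊗[ℂ] ((C' ⊗[ℂ] C') ⊗[ℂ] C') →ₗ[ℂ] C' ⊗[ℂ] C' :=
  (TensorProduct.map (mP tri trl σA σH) (mP tri trl σA σH)) ∘ₗ
    (TensorProduct.tensorTensorTensorComm ℂ C' C' C' C').toLinearMap ∘ₗ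
    (TensorProduct.comm ℂ (C' ⊗[ℂ] C') (C' ⊗[ℂ] C')).toLinearMap ∘ₗ psiS

def Q2 : C' ⊗[ℂ] ((C' ⊗[ℂ] C') ⊗[ℂ] C') →ₗ[ℂ] C' ⊗[ℂ] C' :=
  (TensorProduct.map (mP tri trl σA σH) (mP tri trl σA σH)) ∘ₗ
    (TensorProduct.map (TensorProduct.comm ℂ C' C').toLinearMap
      (TensorProduct.comm ℂ C' C').toLinearMap) ∘ₗ psiS

def Q3 : C' ⊗[ℂ] (C' ⊗[ℂ] C') →ₗ[ℂ] C' ⊗[ℂ] C' :=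
  (LinearMap.lTensor C' (TensorProduct.comm ℂ A H).toLinearMap) ∘ₗ
  (TensorProduct.tensorTensorTensorComm ℂ H A A H).toLinearMap ∘ₗ
  (LinearMap.lTensor C' (TensorProduct.comm ℂ H A).toLinearMap) ∘ₗ
  (TensorProduct.assoc ℂ C' H A).toLinearMap ∘ₗ
  (TensorProduct.comm ℂ A (C' ⊗[ℂ] H)).toLinearMap ∘ₗ
  (TensorProduct.map (TP tri σA σH) (TensorProduct.map LinearMap.id (LP trl σA σH)))

lemma flip_lemma : Q1 tri trl σA σH
    = Q2 tri trl σA σH ∘ₗ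
      (LinearMap.lTensor C' (LinearMap.rTensor C'
        (TensorProduct.comm ℂ C' C').toLinearMap)) := by
  apply ext_mid
  intro p q r s
  simp [Q1, Q2]

lemma fact_lemma : Q2 tri trl σA σH
    = Q3 tri trl σA σH ∘ₗ
      (LinearMap.lTensor C' (LinearMap.rTensor C' (mP tri trl σA σH))) := by
  apply ext_mid
  intro p q r s
  simp [Q2, Q3]

lemma crux (hmp : IsMatchedPair A H tri trl) :
    Δc ∘ₗ gM tri trl σA σH = (TensorProduct.map (gM tri trl σA σH) (gM tri trl σA σH)) ∘ₗ Δc := by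
  apply LinearMap.ext
  intro w
  have hg : gM tri trl σA σH w
      = mP tri trl σA σH ((TensorProduct.comm ℂ C' C') (Δc w)) := rfl
  have hn1 := LinearMap.congr_fun (n1 σA σH hmp) ((TensorProduct.comm ℂ C' C') (Δc w))
  simp only [LinearMap.comp_apply, LinearEquiv.coe_coe] at hn1
  have hmapcomm : (TensorProduct.map Δc Δc) ((TensorProduct.comm ℂ C' C') (Δc w))
      = (TensorProduct.comm ℂ (C' ⊗[ℂ] C') (C' ⊗[ℂ] C'))
          ((TensorProduct.map Δc Δc) (Δc w)) :=
    TensorProduct.map_comm Δc Δc (Δc w)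
  have step1 : Δc (gM tri trl σA σH w) = Q1 tri trl σA σH (D3 w) := by
    rw [hg, hn1, hmapcomm, shuffle]
    simp only [Q1, LinearMap.comp_apply, LinearEquiv.coe_coe]
  have hU : D3 w = (LinearMap.lTensor C' (LinearMap.rTensor C' Δc))
      ((LinearMap.lTensor C' Δc) (Δc w)) := rfl
  have mergeLR : ∀ {Y : Type} [AddCommGroup Y] [Module ℂ Y]
      (h : C' ⊗[ℂ] C' →ₗ[ℂ] Y) (f : C' →ₗ[ℂ] C' ⊗[ℂ] C'),
      (LinearMap.lTensor C' (LinearMap.rTensor C' h))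
        ((LinearMap.lTensor C' (LinearMap.rTensor C' f)) ((LinearMap.lTensor C' Δc) (Δc w)))
      = (LinearMap.lTensor C' (LinearMap.rTensor C' (h ∘ₗ f)))
          ((LinearMap.lTensor C' Δc) (Δc w)) := by
    intro Y _ _ h f
    rw [← LinearMap.comp_apply (LinearMap.lTensor C' (LinearMap.rTensor C' h)),
      ← LinearMap.lTensor_comp, ← LinearMap.rTensor_comp]
  have hQ2Q3 : ∀ (f : C' →ₗ[ℂ] C' ⊗[ℂ] C'),
      Q2 tri trl σA σH ((LinearMap.lTensor C' (LinearMap.rTensor C' f))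
        ((LinearMap.lTensor C' Δc) (Δc w)))
      = Q3 tri trl σA σH ((LinearMap.lTensor C' (LinearMap.rTensor C'
          (mP tri trl σA σH ∘ₗ f))) ((LinearMap.lTensor C' Δc) (Δc w))) := by
    intro f
    have hf := LinearMap.congr_fun (fact_lemma tri trl σA σH)
      ((LinearMap.lTensor C' (LinearMap.rTensor C' f)) ((LinearMap.lTensor C' Δc) (Δc w)))
    simp only [LinearMap.comp_apply] at hf
    rw [hf, mergeLR]
  have hflip := LinearMap.congr_fun (flip_lemma tri trl σA σH) (D3 w)
  simp only [LinearMap.comp_apply] at hflip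
  have hcommmerge : (LinearMap.lTensor C' (LinearMap.rTensor C'
        (TensorProduct.comm ℂ C' C').toLinearMap)) (D3 w)
      = (LinearMap.lTensor C' (LinearMap.rTensor C'
          ((TensorProduct.comm ℂ C' C').toLinearMap ∘ₗ Δc)))
          ((LinearMap.lTensor C' Δc) (Δc w)) := by
    rw [hU]
    exact mergeLR _ Δc
  have hsym : mP tri trl σA σH ∘ₗ (TensorProduct.comm ℂ C' C').toLinearMap ∘ₗ Δc
      = mP tri trl σA σH ∘ₗ Δc := (symP σA σH hmp).symm
  have hcompassoc : mP tri trl σA σH ∘ₗ ((TensorProduct.comm ℂ C' C').toLinearMap ∘ₗ Δc)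
      = mP tri trl σA σH ∘ₗ Δc := by
    rw [← LinearMap.comp_assoc]
    rw [LinearMap.comp_assoc]
    exact hsym
  calc Δc (gM tri trl σA σH w)
      = Q1 tri trl σA σH (D3 w) := step1
    _ = Q2 tri trl σA σH ((LinearMap.lTensor C' (LinearMap.rTensor C'
          (TensorProduct.comm ℂ C' C').toLinearMap)) (D3 w)) := hflip
    _ = Q2 tri trl σA σH ((LinearMap.lTensor C' (LinearMap.rTensor C'
          ((TensorProduct.comm ℂ C' C').toLinearMap ∘ₗ Δc)))
          ((LinearMap.lTensor C' Δc) (Δc w))) := by rw [hcommmerge]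
    _ = Q3 tri trl σA σH ((LinearMap.lTensor C' (LinearMap.rTensor C'
          (mP tri trl σA σH ∘ₗ ((TensorProduct.comm ℂ C' C').toLinearMap ∘ₗ Δc))))
          ((LinearMap.lTensor C' Δc) (Δc w))) := hQ2Q3 _
    _ = Q3 tri trl σA σH ((LinearMap.lTensor C' (LinearMap.rTensor C'
          (mP tri trl σA σH ∘ₗ Δc))) ((LinearMap.lTensor C' Δc) (Δc w))) := by
          rw [hcompassoc]
    _ = Q2 tri trl σA σH ((LinearMap.lTensor C' (LinearMap.rTensor C' Δc))
          ((LinearMap.lTensor C' Δc) (Δc w))) := (hQ2Q3 Δc).symm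
    _ = Q2 tri trl σA σH (D3 w) := by rw [← hU]
    _ = (TensorProduct.map (gM tri trl σA σH) (gM tri trl σA σH)) (Δc w) := by
        have hexp : (TensorProduct.map (gM tri trl σA σH) (gM tri trl σA σH))
            = (TensorProduct.map (mP tri trl σA σH) (mP tri trl σA σH)) ∘ₗ
              (TensorProduct.map (TensorProduct.comm ℂ C' C').toLinearMap
                (TensorProduct.comm ℂ C' C').toLinearMap) ∘ₗ
              (TensorProduct.map Δc Δc) := by
          rw [← TensorProduct.map_comp, ← TensorProduct.map_comp]
          rfl
        rw [hexp]
        simp only [Q2, LinearMap.comp_apply]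
        rw [shuffle]

end Crux
end BXP
namespace BXP
open TensorProduct LinearMap

variable {A H : Type} [Ring A] [HopfAlgebra ℂ A] [Ring H] [HopfAlgebra ℂ H]
variable {M : Type} [Ring M] [HopfAlgebra ℂ M]

section Claim
variable {tri : H →ₗ[ℂ] A →ₗ[ℂ] A} {trl : H →ₗ[ℂ] A →ₗ[ℂ] H}
variable (σA : StarHopf A) (σH : StarHopf H)
variable {e : A ⊗[ℂ] H ≃ₗ[ℂ] M}
variable (hmp : IsMatchedPair A H tri trl) (hM : IsBicross A H tri trl M e)
variable (hc : MPStarCompat tri trl σA σH)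

include hmp hM hc

lemma claimA : uM e ∘ₗ gM tri trl σA σH = vM e := by
  apply LinearMap.ext
  intro w
  have h1 := LinearMap.congr_fun (u_eq hmp hM) (gM tri trl σA σH w)
  simp only [LinearMap.comp_apply, LinearEquiv.coe_coe] at h1
  have h2 := LinearMap.congr_fun (crux tri trl σA σH hmp) w
  simp only [LinearMap.comp_apply] at h2
  have h3 : (TensorProduct.map (TT tri) (LL trl))
        ((TensorProduct.map (gM tri trl σA σH) (gM tri trl σA σH))
          (Coalgebra.comul (R := ℂ) w))
      = (TensorProduct.map cAm cHm) (Coalgebra.comul (R := ℂ) w) := by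
    rw [← LinearMap.comp_apply, ← TensorProduct.map_comp, condT σA σH hmp hc,
      condL σA σH hmp hc]
  have h4 := LinearMap.congr_fun (collapse (A := A) (H := H)) w
  simp only [LinearMap.comp_apply, LinearEquiv.coe_coe] at h4
  rw [LinearMap.comp_apply, h1, h2, h3, h4]
  rfl

lemma claimA_rep {ι κ : Type} {x : H} {a : A} {s : Finset ι} {t : Finset κ}
    {x1 x2 : ι → H} {a1 a2 : κ → A} (hx : Rep2 x s x1 x2) (ha : Rep2 a t a1 a2) :
    ∑ i ∈ s, ∑ j ∈ t,
        e ((1:A) ⊗ₜ[ℂ] σH.st (trl (x2 i) (a2 j))) * e (σA.st (tri (x1 i) (a1 j)) ⊗ₜ[ℂ] (1:H))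
      = e (σA.st a ⊗ₜ[ℂ] σH.st x) := by
  have h := LinearMap.congr_fun (claimA σA σH hmp hM hc) (σH.st x ⊗ₜ[ℂ] σA.st a)
  simp only [LinearMap.comp_apply, vM_tmul] at h
  have hg : gM tri trl σA σH (σH.st x ⊗ₜ[ℂ] σA.st a)
      = ∑ i ∈ s, ∑ j ∈ t,
          σH.st (trl (x2 i) (a2 j)) ⊗ₜ[ℂ] σA.st (tri (x1 i) (a1 j)) := by
    show mP tri trl σA σH ((TensorProduct.comm ℂ (H ⊗[ℂ] A) (H ⊗[ℂ] A))
      (Coalgebra.comul (R := ℂ) (σH.st x ⊗ₜ[ℂ] σA.st a))) = _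
    rw [comulC_rep (σH.st_rep2 hx) (σA.st_rep2 ha), eqv_sum, map_sum]
    refine Finset.sum_congr rfl fun i _ => ?_
    rw [eqv_sum, map_sum]
    refine Finset.sum_congr rfl fun j _ => ?_
    simp [σH.st_invol, σA.st_invol]
  rw [hg, map_sum] at h
  rw [← h]
  refine Finset.sum_congr rfl fun i _ => ?_
  rw [map_sum]
  exact Finset.sum_congr rfl fun j _ => by rw [uM_tmul]

end Claim

section StarM
variable {tri : H →ₗ[ℂ] A →ₗ[ℂ] A} {trl : H →ₗ[ℂ] A →ₗ[ℂ] H}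
variable (σA : StarHopf A) (σH : StarHopf H)
variable (e : A ⊗[ℂ] H ≃ₗ[ℂ] M)

/-- the candidate involution on the bicrossproduct. -/
def stM : M → M := fun m =>
  uM e (stC σA σH ((TensorProduct.comm ℂ A H) (e.symm m)))

lemma stM_apply (a : A) (x : H) :
    stM σA σH e (e (a ⊗ₜ[ℂ] x))
      = e ((1:A) ⊗ₜ[ℂ] σH.st x) * e (σA.st a ⊗ₜ[ℂ] (1:H)) := by
  simp [stM]

lemma stM_add (m n : M) : stM σA σH e (m + n) = stM σA σH e m + stM σA σH e n := by
  simp [stM, map_add]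

lemma stM_zero : stM σA σH e 0 = 0 := by simp [stM]

lemma stM_sum {ι : Type} (s : Finset ι) (f : ι → M) :
    stM σA σH e (∑ i ∈ s, f i) = ∑ i ∈ s, stM σA σH e (f i) := by
  induction s using Finset.cons_induction with
  | empty => simp [stM_zero]
  | cons i s his ih => rw [Finset.sum_cons, Finset.sum_cons, stM_add, ih]

lemma stC_smul (c : ℂ) (w : H ⊗[ℂ] A) :
    stC σA σH (c • w) = (starRingEnd ℂ) c • stC σA σH w := by
  induction w using TensorProduct.induction_on with
  | zero => simp
  | add u v hu hv => rw [smul_add, map_add, hu, hv, map_add, smul_add]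
  | tmul x a =>
    rw [TensorProduct.smul_tmul', stC_tmul, stC_tmul, σH.st_smul, TensorProduct.smul_tmul']

lemma stM_smul (c : ℂ) (m : M) :
    stM σA σH e (c • m) = (starRingEnd ℂ) c • stM σA σH e m := by
  simp only [stM, map_smul, stC_smul]

variable {e}
variable (hmp : IsMatchedPair A H tri trl) (hM : IsBicross A H tri trl M e)
variable (hc : MPStarCompat tri trl σA σH)

include hM in
lemma stM_eA (a : A) : stM σA σH e (e (a ⊗ₜ[ℂ] (1:H))) = e (σA.st a ⊗ₜ[ℂ] (1:H)) := by
  rw [stM_apply, σH.st_one, ← hM.one_def, one_mul]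

include hM in
lemma stM_eH (x : H) : stM σA σH e (e ((1:A) ⊗ₜ[ℂ] x)) = e ((1:A) ⊗ₜ[ℂ] σH.st x) := by
  rw [stM_apply, σA.st_one, ← hM.one_def, mul_one]

include hmp hM hc in
lemma stM_antimul_pure (a b : A) (x y : H) :
    stM σA σH e (e (a ⊗ₜ[ℂ] x) * e (b ⊗ₜ[ℂ] y))
      = stM σA σH e (e (b ⊗ₜ[ℂ] y)) * stM σA σH e (e (a ⊗ₜ[ℂ] x)) := by
  obtain ⟨s, hx⟩ := rep2_exists x
  obtain ⟨t, hb⟩ := rep2_exists b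
  rw [hM.mul_def a b x y s t _ _ _ _ hx hb, stM_sum]
  have step : ∀ i ∈ s, stM σA σH e (∑ j ∈ t,
        e ((a * tri i.1 j.1) ⊗ₜ[ℂ] (trl i.2 j.2 * y)))
      = ∑ j ∈ t, e ((1:A) ⊗ₜ[ℂ] σH.st y) *
          ((e ((1:A) ⊗ₜ[ℂ] σH.st (trl i.2 j.2)) * e (σA.st (tri i.1 j.1) ⊗ₜ[ℂ] (1:H))) *
            e (σA.st a ⊗ₜ[ℂ] (1:H))) := by
    intro i _
    rw [stM_sum]
    refine Finset.sum_congr rfl fun j _ => ?_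
    rw [stM_apply, σH.st_antimul, σA.st_antimul, ← m2 hmp hM, ← m1 hmp hM]
    simp only [mul_assoc]
  rw [Finset.sum_congr rfl step]
  have factor : ∑ i ∈ s, ∑ j ∈ t, e ((1:A) ⊗ₜ[ℂ] σH.st y) *
        ((e ((1:A) ⊗ₜ[ℂ] σH.st (trl i.2 j.2)) * e (σA.st (tri i.1 j.1) ⊗ₜ[ℂ] (1:H))) *
          e (σA.st a ⊗ₜ[ℂ] (1:H)))
      = e ((1:A) ⊗ₜ[ℂ] σH.st y) *
          ((∑ i ∈ s, ∑ j ∈ t,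
            e ((1:A) ⊗ₜ[ℂ] σH.st (trl i.2 j.2)) * e (σA.st (tri i.1 j.1) ⊗ₜ[ℂ] (1:H))) *
            e (σA.st a ⊗ₜ[ℂ] (1:H))) := by
    rw [Finset.sum_mul, Finset.mul_sum]
    refine Finset.sum_congr rfl fun i _ => ?_
    rw [Finset.sum_mul, Finset.mul_sum]
  rw [factor, claimA_rep σA σH hmp hM hc hx hb]
  rw [stM_apply, stM_apply]
  rw [← m3 hmp hM (σA.st b) (σH.st x)]
  simp only [mul_assoc]

end StarM
end BXP
namespace BXP
open TensorProduct LinearMap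

variable {A H : Type} [Ring A] [HopfAlgebra ℂ A] [Ring H] [HopfAlgebra ℂ H]
variable {M : Type} [Ring M] [HopfAlgebra ℂ M]

section StarM2
variable {tri : H →ₗ[ℂ] A →ₗ[ℂ] A} {trl : H →ₗ[ℂ] A →ₗ[ℂ] H}
variable (σA : StarHopf A) (σH : StarHopf H)
variable {e : A ⊗[ℂ] H ≃ₗ[ℂ] M}
variable (hmp : IsMatchedPair A H tri trl) (hM : IsBicross A H tri trl M e)
variable (hc : MPStarCompat tri trl σA σH)

lemma decomp (m : M) : ∃ s : Finset (A × H), m = ∑ p ∈ s, e (p.1 ⊗ₜ[ℂ] p.2) := by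
  obtain ⟨s, hs⟩ := TensorProduct.exists_finset (e.symm m)
  refine ⟨s, ?_⟩
  conv_lhs => rw [← e.apply_symm_apply m, hs]
  rw [eqv_sum]

include hmp hM hc in
lemma stM_antimul (m n : M) :
    stM σA σH e (m * n) = stM σA σH e n * stM σA σH e m := by
  obtain ⟨s, hm⟩ := decomp (e := e) m
  obtain ⟨t, hn⟩ := decomp (e := e) n
  rw [hm, hn, Finset.sum_mul_sum, stM_sum]
  have step : ∀ p ∈ s, stM σA σH e (∑ q ∈ t, e (p.1 ⊗ₜ[ℂ] p.2) * e (q.1 ⊗ₜ[ℂ] q.2))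
      = ∑ q ∈ t, stM σA σH e (e (q.1 ⊗ₜ[ℂ] q.2)) * stM σA σH e (e (p.1 ⊗ₜ[ℂ] p.2)) := by
    intro p _
    rw [stM_sum]
    exact Finset.sum_congr rfl fun q _ => stM_antimul_pure σA σH hmp hM hc _ _ _ _
  rw [Finset.sum_congr rfl step, stM_sum, stM_sum, Finset.sum_mul_sum, Finset.sum_comm]

include hmp hM hc in
lemma stM_invol (m : M) : stM σA σH e (stM σA σH e m) = m := by
  obtain ⟨s, hm⟩ := decomp (e := e) m
  rw [hm, stM_sum, stM_sum]
  refine Finset.sum_congr rfl fun p _ => ?_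
  rw [stM_apply]
  rw [stM_antimul_pure σA σH hmp hM hc 1 (σA.st p.1) (σH.st p.2) 1]
  rw [stM_eA σA σH hM, stM_eH σA σH hM, σA.st_invol, σH.st_invol, m3 hmp hM]

/-- `st ⊗ st` on `M ⊗ M`. -/
def PsiM : M ⊗[ℂ] M →+ M ⊗[ℂ] M :=
  TensorProduct.liftAddHom
    (AddMonoidHom.mk' (fun m => AddMonoidHom.mk'
        (fun n => stM σA σH e m ⊗ₜ[ℂ] stM σA σH e n)
        (fun n n' => by simp only [stM_add, TensorProduct.tmul_add]))
      (fun m m' => by ext n; simp [stM_add, TensorProduct.add_tmul]))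
    (fun c m n => by
      simp only [AddMonoidHom.mk'_apply, stM_smul]
      rw [TensorProduct.smul_tmul])

@[simp] lemma PsiM_tmul (m n : M) :
    PsiM σA σH (e := e) (m ⊗ₜ[ℂ] n) = stM σA σH e m ⊗ₜ[ℂ] stM σA σH e n := rfl

include hmp hM in
lemma stM_comul_key (m : M) :
    Coalgebra.comul (R := ℂ) (stM σA σH e m)
      = PsiM σA σH (e := e) (Coalgebra.comul (R := ℂ) m) := by
  obtain ⟨s, hm⟩ := decomp (e := e) m
  rw [hm, stM_sum, map_sum, map_sum, map_sum]
  refine Finset.sum_congr rfl fun p _ => ?_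
  obtain ⟨sp, hp⟩ := rep2_exists p.1
  obtain ⟨sq, hq⟩ := rep2_exists p.2
  have l1 : stM σA σH e (e (p.1 ⊗ₜ[ℂ] p.2)) = uM e (σH.st p.2 ⊗ₜ[ℂ] σA.st p.1) := by
    rw [stM_apply, uM_tmul]
  rw [l1]
  have l2 := LinearMap.congr_fun (master1 hmp hM) (σH.st p.2 ⊗ₜ[ℂ] σA.st p.1)
  simp only [LinearMap.comp_apply] at l2
  rw [l2, comulC_rep (σH.st_rep2 hq) (σA.st_rep2 hp), map_sum]
  rw [comul_e hmp hM, comulAH_rep hp hq, map_sum, map_sum]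
  have lhs : ∀ i ∈ sq, (TensorProduct.map (uM e) (uM e))
        (∑ j ∈ sp, (σH.st i.1 ⊗ₜ[ℂ] σA.st j.1) ⊗ₜ[ℂ] (σH.st i.2 ⊗ₜ[ℂ] σA.st j.2))
      = ∑ j ∈ sp, uM e (σH.st i.1 ⊗ₜ[ℂ] σA.st j.1) ⊗ₜ[ℂ] uM e (σH.st i.2 ⊗ₜ[ℂ] σA.st j.2) := by
    intro i _
    rw [map_sum]
    exact Finset.sum_congr rfl fun j _ => by simp
  have rhs : ∀ i ∈ sp, PsiM σA σH (e := e) ((TensorProduct.map e.toLinearMap e.toLinearMap)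
        (∑ j ∈ sq, ((i.1 : A) ⊗ₜ[ℂ] (j.1 : H)) ⊗ₜ[ℂ] (i.2 ⊗ₜ[ℂ] j.2)))
      = ∑ j ∈ sq, uM e (σH.st j.1 ⊗ₜ[ℂ] σA.st i.1) ⊗ₜ[ℂ] uM e (σH.st j.2 ⊗ₜ[ℂ] σA.st i.2) := by
    intro i _
    rw [map_sum, map_sum]
    refine Finset.sum_congr rfl fun j _ => ?_
    simp only [TensorProduct.map_tmul, LinearEquiv.coe_coe, PsiM_tmul]
    rw [stM_apply, stM_apply, uM_tmul, uM_tmul]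
  rw [Finset.sum_congr rfl lhs, Finset.sum_congr rfl rhs, Finset.sum_comm]

end StarM2

section Forward
variable {tri : H →ₗ[ℂ] A →ₗ[ℂ] A} {trl : H →ₗ[ℂ] A →ₗ[ℂ] H}
variable (σA : StarHopf A) (σH : StarHopf H)
variable {e : A ⊗[ℂ] H ≃ₗ[ℂ] M}

/-- `e(a ⊗ x) ↦ ε(x) • a`. -/
def pA (e : A ⊗[ℂ] H ≃ₗ[ℂ] M) : M →ₗ[ℂ] A :=
  (TensorProduct.rid ℂ A).toLinearMap ∘ₗ
    (LinearMap.lTensor A (Coalgebra.counit (R := ℂ) (A := H))) ∘ₗ e.symm.toLinearMap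

/-- `e(a ⊗ x) ↦ ε(a) • x`. -/
def pH (e : A ⊗[ℂ] H ≃ₗ[ℂ] M) : M →ₗ[ℂ] H :=
  (TensorProduct.lid ℂ H).toLinearMap ∘ₗ
    (LinearMap.rTensor H (Coalgebra.counit (R := ℂ) (A := A))) ∘ₗ e.symm.toLinearMap

@[simp] lemma pA_apply (a : A) (x : H) :
    pA e (e (a ⊗ₜ[ℂ] x)) = Coalgebra.counit (R := ℂ) x • a := by simp [pA]

@[simp] lemma pH_apply (a : A) (x : H) :
    pH e (e (a ⊗ₜ[ℂ] x)) = Coalgebra.counit (R := ℂ) a • x := by simp [pH]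

variable (σM : StarHopf M)
variable (hmp : IsMatchedPair A H tri trl) (hM : IsBicross A H tri trl M e)
variable (hrA : ∀ a : A, σM.st (e (a ⊗ₜ[ℂ] (1:H))) = e (σA.st a ⊗ₜ[ℂ] (1:H)))
variable (hrH : ∀ x : H, σM.st (e ((1:A) ⊗ₜ[ℂ] x)) = e ((1:A) ⊗ₜ[ℂ] σH.st x))

include hmp hM hrA hrH

lemma fwd1 (b : A) (y : H) :
    σM.st (e (b ⊗ₜ[ℂ] y)) = e ((1:A) ⊗ₜ[ℂ] σH.st y) * e (σA.st b ⊗ₜ[ℂ] (1:H)) := by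
  have h := (m3 hmp hM b y).symm
  rw [h, σM.st_antimul, hrH, hrA]

lemma fwd2 (b : A) (y : H) :
    pA e (σM.st (e (b ⊗ₜ[ℂ] y))) = tri (σH.st y) (σA.st b) := by
  rw [fwd1 σA σH σM hmp hM hrA hrH]
  obtain ⟨sy, hy⟩ := rep2_exists y
  obtain ⟨sb, hb⟩ := rep2_exists b
  rw [hM.mul_def 1 (σA.st b) (σH.st y) 1 _ _ _ _ _ _ (σH.st_rep2 hy) (σA.st_rep2 hb)]
  rw [map_sum]
  have step : ∀ i ∈ sy, pA e (∑ j ∈ sb,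
        e ((1 * tri (σH.st i.1) (σA.st j.1)) ⊗ₜ[ℂ] (trl (σH.st i.2) (σA.st j.2) * 1)))
      = Coalgebra.counit (R := ℂ) (σH.st i.2) •
          tri (σH.st i.1) (∑ j ∈ sb, Coalgebra.counit (R := ℂ) (σA.st j.2) • σA.st j.1) := by
    intro i _
    rw [map_sum]
    have h2 : ∀ j ∈ sb, pA e
          (e ((1 * tri (σH.st i.1) (σA.st j.1)) ⊗ₜ[ℂ] (trl (σH.st i.2) (σA.st j.2) * 1)))
        = Coalgebra.counit (R := ℂ) (σH.st i.2) •
            (Coalgebra.counit (R := ℂ) (σA.st j.2) • tri (σH.st i.1) (σA.st j.1)) := by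
      intro j _
      rw [one_mul, mul_one, pA_apply, hmp.trl_counit]
      rw [mul_smul]
    rw [Finset.sum_congr rfl h2, ← Finset.smul_sum]
    congr 1
    rw [map_sum]
    exact Finset.sum_congr rfl fun j _ => by rw [map_smul]
  rw [Finset.sum_congr rfl step]
  rw [rep2_counit_left (σA.st_rep2 hb)]
  have h3 : ∑ i ∈ sy, Coalgebra.counit (R := ℂ) (σH.st i.2) • tri (σH.st i.1) (σA.st b)
      = tri (∑ i ∈ sy, Coalgebra.counit (R := ℂ) (σH.st i.2) • σH.st i.1) (σA.st b) := by
    rw [map_sum, LinearMap.sum_apply]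
    exact Finset.sum_congr rfl fun i _ => by rw [map_smul, LinearMap.smul_apply]
  rw [h3, rep2_counit_left (σH.st_rep2 hy)]

lemma fwd3 (b : A) (y : H) :
    pH e (σM.st (e (b ⊗ₜ[ℂ] y))) = trl (σH.st y) (σA.st b) := by
  rw [fwd1 σA σH σM hmp hM hrA hrH]
  obtain ⟨sy, hy⟩ := rep2_exists y
  obtain ⟨sb, hb⟩ := rep2_exists b
  rw [hM.mul_def 1 (σA.st b) (σH.st y) 1 _ _ _ _ _ _ (σH.st_rep2 hy) (σA.st_rep2 hb)]
  rw [map_sum]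
  have step : ∀ i ∈ sy, pH e (∑ j ∈ sb,
        e ((1 * tri (σH.st i.1) (σA.st j.1)) ⊗ₜ[ℂ] (trl (σH.st i.2) (σA.st j.2) * 1)))
      = Coalgebra.counit (R := ℂ) (σH.st i.1) •
          trl (σH.st i.2) (∑ j ∈ sb, Coalgebra.counit (R := ℂ) (σA.st j.1) • σA.st j.2) := by
    intro i _
    rw [map_sum]
    have h2 : ∀ j ∈ sb, pH e
          (e ((1 * tri (σH.st i.1) (σA.st j.1)) ⊗ₜ[ℂ] (trl (σH.st i.2) (σA.st j.2) * 1)))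
        = Coalgebra.counit (R := ℂ) (σH.st i.1) •
            (Coalgebra.counit (R := ℂ) (σA.st j.1) • trl (σH.st i.2) (σA.st j.2)) := by
      intro j _
      rw [one_mul, mul_one, pH_apply, hmp.tri_counit]
      rw [mul_smul]
    rw [Finset.sum_congr rfl h2, ← Finset.smul_sum]
    congr 1
    rw [map_sum]
    exact Finset.sum_congr rfl fun j _ => by rw [map_smul]
  rw [Finset.sum_congr rfl step]
  rw [rep2_counit_right (σA.st_rep2 hb)]
  have h3 : ∑ i ∈ sy, Coalgebra.counit (R := ℂ) (σH.st i.1) • trl (σH.st i.2) (σA.st b)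
      = trl (∑ i ∈ sy, Coalgebra.counit (R := ℂ) (σH.st i.1) • σH.st i.2) (σA.st b) := by
    rw [map_sum, LinearMap.sum_apply]
    exact Finset.sum_congr rfl fun i _ => by rw [map_smul, LinearMap.smul_apply]
  rw [h3, rep2_counit_right (σH.st_rep2 hy)]

lemma fwd_cond1 (x : H) (a : A) {ι κ : Type} (s : Finset ι) (t : Finset κ)
    (x1 x2 : ι → H) (a1 a2 : κ → A) (hx : Rep2 x s x1 x2) (ha : Rep2 a t a1 a2) :
    Coalgebra.counit (R := ℂ) (σH.st x) • σA.st a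
      = ∑ i ∈ s, ∑ j ∈ t,
          tri (σH.st (trl (x2 i) (a2 j))) (σA.st (tri (x1 i) (a1 j))) := by
  have hX : e ((1:A) ⊗ₜ[ℂ] x) * e (a ⊗ₜ[ℂ] (1:H))
      = ∑ i ∈ s, ∑ j ∈ t, e (tri (x1 i) (a1 j) ⊗ₜ[ℂ] trl (x2 i) (a2 j)) := by
    rw [hM.mul_def 1 a x 1 s t _ _ _ _ hx ha]
    exact Finset.sum_congr rfl fun i _ => Finset.sum_congr rfl fun j _ => by
      rw [one_mul, mul_one]
  have h1 : σM.st (e ((1:A) ⊗ₜ[ℂ] x) * e (a ⊗ₜ[ℂ] (1:H)))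
      = e (σA.st a ⊗ₜ[ℂ] σH.st x) := by
    rw [σM.st_antimul, hrA, hrH, m3 hmp hM]
  have h2 : pA e (σM.st (e ((1:A) ⊗ₜ[ℂ] x) * e (a ⊗ₜ[ℂ] (1:H))))
      = Coalgebra.counit (R := ℂ) (σH.st x) • σA.st a := by
    rw [h1, pA_apply]
  have h3 : pA e (σM.st (e ((1:A) ⊗ₜ[ℂ] x) * e (a ⊗ₜ[ℂ] (1:H))))
      = ∑ i ∈ s, ∑ j ∈ t,
          tri (σH.st (trl (x2 i) (a2 j))) (σA.st (tri (x1 i) (a1 j))) := by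
    rw [hX, σM.st_sum, map_sum]
    refine Finset.sum_congr rfl fun i _ => ?_
    rw [σM.st_sum, map_sum]
    exact Finset.sum_congr rfl fun j _ =>
      fwd2 σA σH σM hmp hM hrA hrH _ _
  rw [← h2, h3]

lemma fwd_cond2 (x : H) (a : A) {ι κ : Type} (s : Finset ι) (t : Finset κ)
    (x1 x2 : ι → H) (a1 a2 : κ → A) (hx : Rep2 x s x1 x2) (ha : Rep2 a t a1 a2) :
    Coalgebra.counit (R := ℂ) (σA.st a) • σH.st x
      = ∑ i ∈ s, ∑ j ∈ t,
          trl (σH.st (trl (x2 i) (a2 j))) (σA.st (tri (x1 i) (a1 j))) := by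
  have hX : e ((1:A) ⊗ₜ[ℂ] x) * e (a ⊗ₜ[ℂ] (1:H))
      = ∑ i ∈ s, ∑ j ∈ t, e (tri (x1 i) (a1 j) ⊗ₜ[ℂ] trl (x2 i) (a2 j)) := by
    rw [hM.mul_def 1 a x 1 s t _ _ _ _ hx ha]
    exact Finset.sum_congr rfl fun i _ => Finset.sum_congr rfl fun j _ => by
      rw [one_mul, mul_one]
  have h1 : σM.st (e ((1:A) ⊗ₜ[ℂ] x) * e (a ⊗ₜ[ℂ] (1:H)))
      = e (σA.st a ⊗ₜ[ℂ] σH.st x) := by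
    rw [σM.st_antimul, hrA, hrH, m3 hmp hM]
  have h2 : pH e (σM.st (e ((1:A) ⊗ₜ[ℂ] x) * e (a ⊗ₜ[ℂ] (1:H))))
      = Coalgebra.counit (R := ℂ) (σA.st a) • σH.st x := by
    rw [h1, pH_apply]
  have h3 : pH e (σM.st (e ((1:A) ⊗ₜ[ℂ] x) * e (a ⊗ₜ[ℂ] (1:H))))
      = ∑ i ∈ s, ∑ j ∈ t,
          trl (σH.st (trl (x2 i) (a2 j))) (σA.st (tri (x1 i) (a1 j))) := by
    rw [hX, σM.st_sum, map_sum]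
    refine Finset.sum_congr rfl fun i _ => ?_
    rw [σM.st_sum, map_sum]
    exact Finset.sum_congr rfl fun j _ =>
      fwd3 σA σH σM hmp hM hrA hrH _ _
  rw [← h2, h3]

end Forward
end BXP
/-- Let `(A, H, ◁, ▷)` be a matched pair of Hopf algebras where `A` and `H`
are `*`-Hopf algebras.  There exists a `*`-Hopf algebra structure on the bicrossproduct
`A ⋈ H` restricting to the given involutions on `A` and `H` if and only if
`a* ε_H(x*) = ∑ (x₂ ◁ a₂)* ▷ (x₁ ▷ a₁)*` and `ε_A(a*) x* = ∑ (x₂ ◁ a₂)* ◁ (x₁ ▷ a₁)*`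
for all `x ∈ H`, `a ∈ A`. -/
theorem bicrossproduct_star_iff
    {A H : Type} [Ring A] [HopfAlgebra ℂ A] [Ring H] [HopfAlgebra ℂ H]
    (tri : H →ₗ[ℂ] A →ₗ[ℂ] A) (trl : H →ₗ[ℂ] A →ₗ[ℂ] H)
    (hmp : IsMatchedPair A H tri trl)
    (σA : StarHopf A) (σH : StarHopf H)
    (M : Type) [Ring M] [HopfAlgebra ℂ M] (e : A ⊗[ℂ] H ≃ₗ[ℂ] M)
    (hM : IsBicross A H tri trl M e) :
    (∃ σM : StarHopf M,
        (∀ a : A, σM.st (e (a ⊗ₜ[ℂ] (1 : H))) = e (σA.st a ⊗ₜ[ℂ] (1 : H))) ∧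
        (∀ x : H, σM.st (e ((1 : A) ⊗ₜ[ℂ] x)) = e ((1 : A) ⊗ₜ[ℂ] σH.st x)))
      ↔ MPStarCompat tri trl σA σH := by
  constructor
  · rintro ⟨σM, hrA, hrH⟩
    constructor
    · intro x a ι κ s t x1 x2 a1 a2 hx ha
      exact BXP.fwd_cond1 σA σH σM hmp hM hrA hrH x a s t x1 x2 a1 a2 hx ha
    · intro x a ι κ s t x1 x2 a1 a2 hx ha
      exact BXP.fwd_cond2 σA σH σM hmp hM hrA hrH x a s t x1 x2 a1 a2 hx ha
  · intro hc
    refine ⟨{ st := BXP.stM σA σH e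
              st_add := BXP.stM_add σA σH e
              st_smul := BXP.stM_smul σA σH e
              st_invol := BXP.stM_invol σA σH hmp hM hc
              st_antimul := BXP.stM_antimul σA σH hmp hM hc
              st_comul := ?_ }, ?_, ?_⟩
    · intro m ι s m1 m2 hrep
      have hkey := BXP.stM_comul_key σA σH hmp hM m
      rw [hkey, BXP.rep2_eq hrep, map_sum]
      rfl
    · exact fun a => BXP.stM_eA σA σH hM a
    · exact fun x => BXP.stM_eH σA σH hM x
end
end

section
/- Let H be a finite dimensional *-Hopf algebra, let V be a Yetter–Drinfel'd module over H, regarded also as a D(H)-module via the equivalence of categories, and let ⟨ , ⟩ be a hermitian form on V. Then ⟨ , ⟩ is invariant for the D(H)-module structure (⟨d·u,v⟩ = ⟨u,d*·v⟩ for all d ∈ D(H)) if and only if it is simultaneously invariant for the H-module structure (⟨x·u,v⟩ = ⟨u,x*·v⟩ for all x ∈ H) and for the H-comodule structure (∑S(u₋₁)⟨u₀,v⟩ = ∑v₋₁*⟨u,v₀⟩). -/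
open scoped TensorProduct
open Coalgebra

noncomputable section

/-- The convolution product on the linear dual of a Hopf algebra. -/
def convMul {H : Type} [Ring H] [HopfAlgebra ℂ H]
    (α β : Module.Dual ℂ H) : Module.Dual ℂ H :=
  (TensorProduct.dualDistrib ℂ H H (α ⊗ₜ[ℂ] β)) ∘ₗ Coalgebra.comul (R := ℂ)

/-- The involution `α*(x) = conj (α (S(x)*))` on the dual of a finite `*`-Hopf algebra. -/
def starDual {H : Type} [Ring H] [HopfAlgebra ℂ H] (σ : StarHopf H)
    (α : Module.Dual ℂ H) : Module.Dual ℂ H where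
  toFun z := (starRingEnd ℂ) (α (σ.st (HopfAlgebra.antipode (R := ℂ) z)))
  map_add' z w := by
    show (starRingEnd ℂ) (α (σ.st (HopfAlgebra.antipode (R := ℂ) (z + w)))) = _
    rw [map_add, σ.st_add, map_add, map_add]
  map_smul' c z := by
    show (starRingEnd ℂ) (α (σ.st (HopfAlgebra.antipode (R := ℂ) (c • z)))) = _
    rw [map_smul, σ.st_smul, map_smul, smul_eq_mul, map_mul, Complex.conj_conj]
    simp [smul_eq_mul]

/-- `DH`, identified with `H^∨ ⊗ H` via `e`, carries the Hopf algebra structure of the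
quantum double `D(H) = H^(∨ cop) ⋈ H` together with its natural involution:
the product is `(α x)(β y) = ∑ α (x₁ ⇀ β ↼ S⁻¹(x₃)) x₂ y`, the coproduct is
`Δ(α x) = ∑ α₂ x₁ ⊗ α₁ x₂`, and the involution is
`(α x)* = ∑ (x₁* ⇀ α* ↼ S⁻¹(x₃)*) x₂*`. -/
structure IsQuantumDouble (H : Type) [Ring H] [HopfAlgebra ℂ H] (σ : StarHopf H)
    (Sinv : H →ₗ[ℂ] H)
    (DH : Type) [Ring DH] [HopfAlgebra ℂ DH]
    (e : Module.Dual ℂ H ⊗[ℂ] H ≃ₗ[ℂ] DH) (σD : StarHopf DH) : Prop where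
  mul_def : ∀ (α β : Module.Dual ℂ H) (x y : H) {ι : Type} (s : Finset ι)
      (x1 x2 x3 : ι → H),
      comul3 H x = ∑ i ∈ s, (x1 i ⊗ₜ[ℂ] x2 i) ⊗ₜ[ℂ] x3 i →
      e (α ⊗ₜ[ℂ] x) * e (β ⊗ₜ[ℂ] y)
        = ∑ i ∈ s, e (convMul α
            (β ∘ₗ ((LinearMap.mulRight ℂ (x1 i)) ∘ₗ (LinearMap.mulLeft ℂ (Sinv (x3 i)))))
            ⊗ₜ[ℂ] (x2 i * y))
  one_def : (1 : DH) = e ((Coalgebra.counit (R := ℂ) : H →ₗ[ℂ] ℂ) ⊗ₜ[ℂ] (1 : H))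
  comul_def : ∀ (α : Module.Dual ℂ H) (x : H) {ι κ : Type} (s : Finset ι) (t : Finset κ)
      (x1 x2 : ι → H) (α1 α2 : κ → Module.Dual ℂ H),
      Rep2 x s x1 x2 →
      (∀ u v : H, α (u * v) = ∑ j ∈ t, α1 j u * α2 j v) →
      Coalgebra.comul (R := ℂ) (e (α ⊗ₜ[ℂ] x))
        = ∑ i ∈ s, ∑ j ∈ t, e (α2 j ⊗ₜ[ℂ] x1 i) ⊗ₜ[ℂ] e (α1 j ⊗ₜ[ℂ] x2 i)
  counit_def : ∀ (α : Module.Dual ℂ H) (x : H),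
      Coalgebra.counit (R := ℂ) (e (α ⊗ₜ[ℂ] x)) = α 1 * Coalgebra.counit (R := ℂ) x
  star_def : ∀ (α : Module.Dual ℂ H) (x : H) {ι : Type} (s : Finset ι)
      (x1 x2 x3 : ι → H),
      comul3 H x = ∑ i ∈ s, (x1 i ⊗ₜ[ℂ] x2 i) ⊗ₜ[ℂ] x3 i →
      σD.st (e (α ⊗ₜ[ℂ] x))
        = ∑ i ∈ s, e ((starDual σ α ∘ₗ
            ((LinearMap.mulRight ℂ (σ.st (x1 i))) ∘ₗ
              (LinearMap.mulLeft ℂ (σ.st (Sinv (x3 i))))))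
            ⊗ₜ[ℂ] σ.st (x2 i))

/-- A left comodule over a Hopf algebra. -/
structure LeftComodule (H : Type) [Ring H] [HopfAlgebra ℂ H]
    (V : Type) [AddCommGroup V] [Module ℂ V] : Type where
  χ : V →ₗ[ℂ] H ⊗[ℂ] V
  counit_cond : ∀ v : V, (TensorProduct.lid ℂ V)
      ((LinearMap.rTensor V (Coalgebra.counit (R := ℂ))) (χ v)) = v
  coassoc_cond : ∀ v : V, (TensorProduct.assoc ℂ H H V)
      ((LinearMap.rTensor V (Coalgebra.comul (R := ℂ))) (χ v))
      = (LinearMap.lTensor H χ) (χ v)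

/-- A left module structure (a representation) of an algebra on a complex vector space. -/
structure LeftModuleStr (H : Type) [Ring H] [HopfAlgebra ℂ H]
    (V : Type) [AddCommGroup V] [Module ℂ V] : Type where
  act : H →ₗ[ℂ] V →ₗ[ℂ] V
  act_one : ∀ v : V, act 1 v = v
  act_mul : ∀ (x y : H) (v : V), act (x * y) v = act x (act y v)

section Basic
variable {H : Type} [Ring H] [HopfAlgebra ℂ H]

/-- convert a `Rep2` into a mathlib `Coalgebra.Repr`. -/
def Rep2.toRepr {ι : Type} {x : H} {s : Finset ι} {x1 x2 : ι → H}
    (h : Rep2 x s x1 x2) : Coalgebra.Repr ℂ x ι := ⟨s, x1, x2, h.symm⟩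

lemma rep2_of_repr {ι : Type} {x : H} (r : Coalgebra.Repr ℂ x ι) :
    Rep2 x r.index r.left r.right := r.eq.symm

lemma sum_eps_left {ι : Type} {x : H} {s : Finset ι} {x1 x2 : ι → H}
    (h : Rep2 x s x1 x2) :
    ∑ i ∈ s, (Coalgebra.counit (R := ℂ) (x1 i)) • x2 i = x := by
  have h2 := Coalgebra.sum_counit_tmul_eq (R := ℂ) h.toRepr
  apply_fun (TensorProduct.lid ℂ H) at h2
  simp only [map_sum, TensorProduct.lid_tmul] at h2
  rw [one_smul] at h2
  exact h2

lemma sum_eps_right {ι : Type} {x : H} {s : Finset ι} {x1 x2 : ι → H}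
    (h : Rep2 x s x1 x2) :
    ∑ i ∈ s, (Coalgebra.counit (R := ℂ) (x2 i)) • x1 i = x := by
  have h2 := Coalgebra.sum_tmul_counit_eq (R := ℂ) h.toRepr
  apply_fun (TensorProduct.rid ℂ H) at h2
  simp only [map_sum, TensorProduct.rid_tmul] at h2
  rw [one_smul] at h2
  exact h2

lemma eps_expand {ι : Type} {x : H} {s : Finset ι} {x1 x2 : ι → H}
    (h : Rep2 x s x1 x2) :
    ∑ i ∈ s, (Coalgebra.counit (R := ℂ) (x1 i)) * (Coalgebra.counit (R := ℂ) (x2 i))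
      = Coalgebra.counit (R := ℂ) x := by
  have h2 := congrArg (Coalgebra.counit (R := ℂ)) (sum_eps_left h)
  simpa only [map_sum, map_smul, smul_eq_mul] using h2

lemma sum_S_mul {ι : Type} {x : H} {s : Finset ι} {x1 x2 : ι → H}
    (h : Rep2 x s x1 x2) :
    ∑ i ∈ s, HopfAlgebra.antipode (R := ℂ) (x1 i) * x2 i
      = Coalgebra.counit (R := ℂ) x • 1 :=
  HopfAlgebra.sum_antipode_mul_eq_smul h.toRepr

lemma sum_mul_S {ι : Type} {x : H} {s : Finset ι} {x1 x2 : ι → H}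
    (h : Rep2 x s x1 x2) :
    ∑ i ∈ s, x1 i * HopfAlgebra.antipode (R := ℂ) (x2 i)
      = Coalgebra.counit (R := ℂ) x • 1 :=
  HopfAlgebra.sum_mul_antipode_eq_smul h.toRepr

lemma rep2_one : Rep2 (1 : H) (Finset.univ : Finset Unit)
    (fun _ => (1 : H)) (fun _ => (1 : H)) := by
  unfold Rep2
  rw [(Bialgebra.comul_one : Coalgebra.comul (R := ℂ) (1 : H) = 1),
    Algebra.TensorProduct.one_def]
  simp

lemma S_one : HopfAlgebra.antipode (R := ℂ) (1 : H) = 1 := by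
  have := sum_mul_S (x := (1 : H)) rep2_one
  simpa using this

lemma eps_S (x : H) :
    Coalgebra.counit (R := ℂ) (HopfAlgebra.antipode (R := ℂ) x)
      = Coalgebra.counit (R := ℂ) x := by
  set r := Coalgebra.Repr.arbitrary ℂ x
  have hr := rep2_of_repr r
  have h1 : ∑ i ∈ r.index,
      (Coalgebra.counit (R := ℂ) (HopfAlgebra.antipode (R := ℂ) (r.left i)))
        * (Coalgebra.counit (R := ℂ) (r.right i)) = Coalgebra.counit (R := ℂ) x := by
    have := congrArg (Coalgebra.counit (R := ℂ)) (sum_S_mul hr)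
    simpa only [map_sum, map_smul, Bialgebra.counit_mul, smul_eq_mul,
      Bialgebra.counit_one, mul_one] using this
  have h2 : HopfAlgebra.antipode (R := ℂ) x
      = ∑ i ∈ r.index, (Coalgebra.counit (R := ℂ) (r.right i)) •
          HopfAlgebra.antipode (R := ℂ) (r.left i) := by
    conv_lhs => rw [← sum_eps_right hr]
    simp [map_sum]
  rw [h2, map_sum]
  simp only [map_smul, smul_eq_mul]
  rw [← h1]
  exact Finset.sum_congr rfl fun i _ => mul_comm _ _

end Basic
section StarBasics
variable {H : Type} [Ring H] [HopfAlgebra ℂ H] (σ : StarHopf H)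

lemma st_zero : σ.st 0 = 0 := by
  have := σ.st_smul 0 0
  simpa using this

lemma st_one : σ.st 1 = 1 := by
  have h := σ.st_antimul (σ.st 1) 1
  rw [mul_one, σ.st_invol, mul_one] at h
  exact h.symm

lemma st_sum {ι : Type} (s : Finset ι) (f : ι → H) :
    σ.st (∑ i ∈ s, f i) = ∑ i ∈ s, σ.st (f i) := by
  classical
  induction s using Finset.induction_on with
  | empty => simpa using st_zero σ
  | insert _ _ hx ih => rename_i a s' _; rw [Finset.sum_insert hx, Finset.sum_insert hx, σ.st_add, ih]

lemma rep2_st {ι : Type} {x : H} {s : Finset ι} {x1 x2 : ι → H}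
    (h : Rep2 x s x1 x2) :
    Rep2 (σ.st x) s (fun i => σ.st (x1 i)) (fun i => σ.st (x2 i)) :=
  σ.st_comul x s x1 x2 h

end StarBasics

section Sep
variable {V : Type} [AddCommGroup V] [Module ℂ V]

lemma dual_sep {a b : V} (h : ∀ φ : Module.Dual ℂ V, φ a = φ b) : a = b := by
  have h2 : ∀ φ : Module.Dual ℂ V, φ (a - b) = 0 := fun φ => by
    rw [map_sub, h φ, sub_self]
  have := (Module.forall_dual_apply_eq_zero_iff ℂ (a - b)).mp h2
  exact sub_eq_zero.mp this

end Sep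

section DoubleLemmas
variable {H : Type} [Ring H] [HopfAlgebra ℂ H]

/-- contraction `γ ⊗ h ↦ γ z • h`. -/
def contrAt (z : H) : Module.Dual ℂ H ⊗[ℂ] H →ₗ[ℂ] H :=
  (TensorProduct.lid ℂ H).toLinearMap ∘ₗ
    (LinearMap.rTensor H (LinearMap.applyₗ z))

@[simp] lemma contrAt_tmul (z : H) (γ : Module.Dual ℂ H) (h : H) :
    contrAt z (γ ⊗ₜ[ℂ] h) = γ z • h := by
  simp [contrAt]

/-- strip `γ ⊗ₜ 1` when `1 ≠ 0`. -/
lemma strip_one (h1 : (1 : H) ≠ 0) {α β : Module.Dual ℂ H}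
    (h : α ⊗ₜ[ℂ] (1 : H) = β ⊗ₜ[ℂ] (1 : H)) : α = β := by
  have hφ : ∃ φ : Module.Dual ℂ H, φ 1 ≠ 0 := by
    by_contra hc
    push_neg at hc
    exact h1 ((Module.forall_dual_apply_eq_zero_iff ℂ (1 : H)).mp hc)
  obtain ⟨φ, hφ⟩ := hφ
  let T : Module.Dual ℂ H ⊗[ℂ] H →ₗ[ℂ] Module.Dual ℂ H :=
    (TensorProduct.rid ℂ (Module.Dual ℂ H)).toLinearMap ∘ₗ
      (LinearMap.lTensor (Module.Dual ℂ H) φ)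
  have hT : ∀ γ : Module.Dual ℂ H, T (γ ⊗ₜ[ℂ] (1 : H)) = φ 1 • γ := by
    intro γ; simp [T]
  have h2 := congrArg T h
  rw [hT, hT] at h2
  have := congrArg (fun γ => (φ 1)⁻¹ • γ) h2
  simpa [smul_smul, inv_mul_cancel₀ hφ] using this

lemma comul3_one : comul3 H 1
    = ∑ _i ∈ (Finset.univ : Finset Unit), ((1 : H) ⊗ₜ[ℂ] (1 : H)) ⊗ₜ[ℂ] (1 : H) := by
  have h1 : Coalgebra.comul (R := ℂ) (1 : H) = (1 : H) ⊗ₜ[ℂ] (1 : H) := by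
    rw [(Bialgebra.comul_one : Coalgebra.comul (R := ℂ) (1 : H) = 1),
      Algebra.TensorProduct.one_def]
  simp [comul3, h1]

end DoubleLemmas
section CanonRep
variable {H : Type} [Ring H] [HopfAlgebra ℂ H]

/-- a canonical finite representation of the comultiplication. -/
def crep (a : H) : Finset (H × H) :=
  (TensorProduct.exists_finset (R := ℂ) (Coalgebra.comul (R := ℂ) a)).choose

lemma crep_spec (a : H) : Rep2 a (crep a) Prod.fst Prod.snd :=
  (TensorProduct.exists_finset (R := ℂ) (Coalgebra.comul (R := ℂ) a)).choose_spec

/-- the canonical representation as a mathlib `Coalgebra.Repr`. -/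
def crepr (a : H) : Coalgebra.Repr ℂ a (H × H) := ⟨crep a, Prod.fst, Prod.snd, (crep_spec a).symm⟩

variable (σ : StarHopf H) (Sinv : H →ₗ[ℂ] H)
  (hSinv₁ : ∀ x : H, Sinv (HopfAlgebra.antipode (R := ℂ) x) = x)
  (hSinv₂ : ∀ x : H, HopfAlgebra.antipode (R := ℂ) (Sinv x) = x)

include hSinv₁ in

lemma Sinv_one : Sinv (1 : H) = 1 := by
  have := hSinv₁ 1
  rwa [S_one] at this

include hSinv₂ in
lemma eps_Sinv (y : H) :
    Coalgebra.counit (R := ℂ) (Sinv y) = Coalgebra.counit (R := ℂ) y := by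
  conv_rhs => rw [← hSinv₂ y, eps_S]

lemma starDual_apply (α : Module.Dual ℂ H) (z : H) :
    starDual σ α z
      = (starRingEnd ℂ) (α (σ.st (HopfAlgebra.antipode (R := ℂ) z))) := rfl

variable {DH : Type} [Ring DH] [HopfAlgebra ℂ DH]
  (e : Module.Dual ℂ H ⊗[ℂ] H ≃ₗ[ℂ] DH) (σD : StarHopf DH)
  (hD : IsQuantumDouble H σ Sinv DH e σD)

include hSinv₁ hD in
lemma starE1 (α : Module.Dual ℂ H) :
    σD.st (e (α ⊗ₜ[ℂ] (1 : H))) = e (starDual σ α ⊗ₜ[ℂ] (1 : H)) := by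
  have h := hD.star_def α 1 (Finset.univ : Finset Unit)
    (fun _ => (1 : H)) (fun _ => (1 : H)) (fun _ => (1 : H)) comul3_one
  simpa [st_one, Sinv_one Sinv hSinv₁, LinearMap.mulRight_one, LinearMap.mulLeft_one] using h

variable (hH1 : (1 : H) ≠ 0)

include hSinv₁ hD hH1 in
lemma starDual_starDual (α : Module.Dual ℂ H) :
    starDual σ (starDual σ α) = α := by
  have h := σD.st_invol (e (α ⊗ₜ[ℂ] (1 : H)))
  rw [starE1 σ Sinv hSinv₁ e σD hD, starE1 σ Sinv hSinv₁ e σD hD] at h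
  exact strip_one hH1 (e.injective h)

include hSinv₁ hD hH1 in
lemma stSstS (z : H) :
    σ.st (HopfAlgebra.antipode (R := ℂ)
      (σ.st (HopfAlgebra.antipode (R := ℂ) z))) = z := by
  apply dual_sep
  intro φ
  have h := LinearMap.congr_fun
    (starDual_starDual σ Sinv hSinv₁ e σD hD hH1 φ) z
  rw [starDual_apply, starDual_apply] at h
  simpa using h

include hSinv₁ hSinv₂ hD hH1 in
lemma st_S_st (y : H) :
    σ.st (HopfAlgebra.antipode (R := ℂ) (σ.st y)) = Sinv y := by
  have h := stSstS σ Sinv hSinv₁ e σD hD hH1 (Sinv y)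
  rwa [hSinv₂ y] at h

include hSinv₁ hSinv₂ hD hH1 in
lemma eps_st (x : H) :
    Coalgebra.counit (R := ℂ) (σ.st x)
      = (starRingEnd ℂ) (Coalgebra.counit (R := ℂ) x) := by
  have hr := crep_spec x
  have hst := rep2_st σ hr
  have h2 := congrArg σ.st (sum_mul_S hst)
  rw [st_sum] at h2
  simp only [σ.st_antimul, st_S_st σ Sinv hSinv₁ hSinv₂ e σD hD hH1, σ.st_invol] at h2
  rw [σ.st_smul, st_one] at h2
  have h3 := congrArg (Coalgebra.counit (R := ℂ)) h2
  simp only [map_sum, Bialgebra.counit_mul, map_smul, Bialgebra.counit_one,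
    smul_eq_mul, mul_one, eps_Sinv Sinv hSinv₂] at h3
  have h4 : ∑ p ∈ crep x, Coalgebra.counit (R := ℂ) p.2 * Coalgebra.counit (R := ℂ) p.1
      = Coalgebra.counit (R := ℂ) x := by
    rw [← eps_expand hr]
    exact Finset.sum_congr rfl fun p _ => mul_comm _ _
  rw [h4] at h3
  have := congrArg (starRingEnd ℂ) h3
  simpa using this.symm

include hSinv₁ hSinv₂ hD hH1 in
lemma C1 {ι : Type} {x : H} {s : Finset ι} {x1 x2 : ι → H} (h : Rep2 x s x1 x2) :
    ∑ i ∈ s, Sinv (x2 i) * x1 i = Coalgebra.counit (R := ℂ) x • 1 := by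
  have hst := rep2_st σ h
  have h2 := congrArg σ.st (sum_mul_S hst)
  rw [st_sum] at h2
  simp only [σ.st_antimul, st_S_st σ Sinv hSinv₁ hSinv₂ e σD hD hH1, σ.st_invol] at h2
  rw [σ.st_smul, st_one, eps_st σ Sinv hSinv₁ hSinv₂ e σD hD hH1] at h2
  simpa using h2

end CanonRep
section Conv
variable {H : Type} [Ring H] [HopfAlgebra ℂ H]

lemma convMul_apply {ι : Type} {x : H} {s : Finset ι} {x1 x2 : ι → H}
    (h : Rep2 x s x1 x2) (α β : Module.Dual ℂ H) :
    convMul α β x = ∑ i ∈ s, α (x1 i) * β (x2 i) := by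
  unfold convMul
  rw [LinearMap.comp_apply, h, map_sum]
  simp

lemma convMul_counit_right (α : Module.Dual ℂ H) :
    convMul α (Coalgebra.counit (R := ℂ)) = α := by
  ext z
  rw [convMul_apply (crep_spec z)]
  have : ∑ p ∈ crep z, α p.1 * Coalgebra.counit (R := ℂ) p.2
      = α (∑ p ∈ crep z, Coalgebra.counit (R := ℂ) p.2 • p.1) := by
    rw [map_sum]
    exact Finset.sum_congr rfl fun p _ => by rw [map_smul, smul_eq_mul, mul_comm]
  rw [this, sum_eps_right (crep_spec z)]

lemma convMul_counit_left (β : Module.Dual ℂ H) :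
    convMul (Coalgebra.counit (R := ℂ)) β = β := by
  ext z
  rw [convMul_apply (crep_spec z)]
  have : ∑ p ∈ crep z, Coalgebra.counit (R := ℂ) p.1 * β p.2
      = β (∑ p ∈ crep z, Coalgebra.counit (R := ℂ) p.1 • p.2) := by
    rw [map_sum]
    exact Finset.sum_congr rfl fun p _ => by rw [map_smul, smul_eq_mul]
  rw [this, sum_eps_left (crep_spec z)]

variable (σ : StarHopf H) (Sinv : H →ₗ[ℂ] H)
  (hSinv₁ : ∀ x : H, Sinv (HopfAlgebra.antipode (R := ℂ) x) = x)
  (hSinv₂ : ∀ x : H, HopfAlgebra.antipode (R := ℂ) (Sinv x) = x)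
  {DH : Type} [Ring DH] [HopfAlgebra ℂ DH]
  (e : Module.Dual ℂ H ⊗[ℂ] H ≃ₗ[ℂ] DH) (σD : StarHopf DH)
  (hD : IsQuantumDouble H σ Sinv DH e σD)

include hSinv₁ hD in
lemma factorE (α : Module.Dual ℂ H) (x : H) :
    e (α ⊗ₜ[ℂ] x)
      = e (α ⊗ₜ[ℂ] (1 : H)) * e ((Coalgebra.counit (R := ℂ) : H →ₗ[ℂ] ℂ) ⊗ₜ[ℂ] x) := by
  have h := hD.mul_def α (Coalgebra.counit (R := ℂ)) 1 x (Finset.univ : Finset Unit)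
    (fun _ => (1 : H)) (fun _ => (1 : H)) (fun _ => (1 : H)) comul3_one
  simpa [Sinv_one Sinv hSinv₁, LinearMap.mulRight_one, LinearMap.mulLeft_one,
    convMul_counit_right] using h.symm

end Conv

section Comul3Rep
variable {H : Type} [Ring H] [HopfAlgebra ℂ H]

lemma comul3_rep {ι : Type} {x : H} {s : Finset ι} {x1 x2 : ι → H}
    (h : Rep2 x s x1 x2) :
    comul3 H x = ∑ q ∈ s.sigma (fun i => crep (x1 i)),
      ((q.2.1 : H) ⊗ₜ[ℂ] (q.2.2 : H)) ⊗ₜ[ℂ] x2 q.1 := by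
  unfold comul3
  rw [LinearMap.comp_apply, h, map_sum, Finset.sum_sigma]
  refine Finset.sum_congr rfl fun i _ => ?_
  rw [LinearMap.rTensor_tmul, crep_spec (x1 i), TensorProduct.sum_tmul]

lemma comul3_st_rep (σ : StarHopf H) {ι : Type} {x : H} {s : Finset ι} {x1 x2 : ι → H}
    (h : Rep2 x s x1 x2) :
    comul3 H (σ.st x) = ∑ q ∈ s.sigma (fun i => crep (x1 i)),
      ((σ.st (q.2.1 : H)) ⊗ₜ[ℂ] (σ.st (q.2.2 : H))) ⊗ₜ[ℂ] σ.st (x2 q.1) := by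
  unfold comul3
  rw [LinearMap.comp_apply, rep2_st σ h, map_sum, Finset.sum_sigma]
  refine Finset.sum_congr rfl fun i _ => ?_
  rw [LinearMap.rTensor_tmul, rep2_st σ (crep_spec (x1 i)), TensorProduct.sum_tmul]

lemma counit_comp_mulLR (a b : H) :
    ((Coalgebra.counit (R := ℂ) : H →ₗ[ℂ] ℂ) ∘ₗ
        ((LinearMap.mulRight ℂ a) ∘ₗ (LinearMap.mulLeft ℂ b)))
      = (Coalgebra.counit (R := ℂ) b * Coalgebra.counit (R := ℂ) a)
          • (Coalgebra.counit (R := ℂ) : H →ₗ[ℂ] ℂ) := by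
  ext z
  simp only [LinearMap.comp_apply, LinearMap.mulRight_apply, LinearMap.mulLeft_apply,
    LinearMap.smul_apply, Bialgebra.counit_mul, smul_eq_mul]
  ring

variable (σ : StarHopf H) (Sinv : H →ₗ[ℂ] H)
  (hSinv₁ : ∀ x : H, Sinv (HopfAlgebra.antipode (R := ℂ) x) = x)
  (hSinv₂ : ∀ x : H, HopfAlgebra.antipode (R := ℂ) (Sinv x) = x)
  {DH : Type} [Ring DH] [HopfAlgebra ℂ DH]
  (e : Module.Dual ℂ H ⊗[ℂ] H ≃ₗ[ℂ] DH) (σD : StarHopf DH)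
  (hD : IsQuantumDouble H σ Sinv DH e σD) (hH1 : (1 : H) ≠ 0)

include hSinv₁ hSinv₂ hD hH1 in
lemma starDual_counit :
    starDual σ (Coalgebra.counit (R := ℂ) : H →ₗ[ℂ] ℂ)
      = (Coalgebra.counit (R := ℂ) : H →ₗ[ℂ] ℂ) := by
  ext z
  rw [starDual_apply, eps_st σ Sinv hSinv₁ hSinv₂ e σD hD hH1, eps_S]
  simp

include hSinv₁ hSinv₂ hD hH1 in
set_option maxHeartbeats 1000000 in
set_option synthInstance.maxHeartbeats 400000 in
lemma starE (x : H) :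
    σD.st (e ((Coalgebra.counit (R := ℂ) : H →ₗ[ℂ] ℂ) ⊗ₜ[ℂ] x))
      = e ((Coalgebra.counit (R := ℂ) : H →ₗ[ℂ] ℂ) ⊗ₜ[ℂ] σ.st x) := by
  have h := hD.star_def (Coalgebra.counit (R := ℂ)) x
    ((crep x).sigma (fun p => crep p.1))
    (fun q => (q.2.1 : H)) (fun q => (q.2.2 : H)) (fun q => Prod.snd q.1)
    (comul3_rep (crep_spec x))
  rw [starDual_counit σ Sinv hSinv₁ hSinv₂ e σD hD hH1] at h
  have h2 : ∀ q : (_ : H × H) × H × H,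
      ((Coalgebra.counit (R := ℂ) : H →ₗ[ℂ] ℂ) ∘ₗ
        ((LinearMap.mulRight ℂ (σ.st q.2.1)) ∘ₗ
          (LinearMap.mulLeft ℂ (σ.st (Sinv (Prod.snd q.1))))))
        ⊗ₜ[ℂ] σ.st q.2.2
      = (Coalgebra.counit (R := ℂ) : H →ₗ[ℂ] ℂ) ⊗ₜ[ℂ]
          (((starRingEnd ℂ) (Coalgebra.counit (R := ℂ) (Prod.snd q.1))
            * (starRingEnd ℂ) (Coalgebra.counit (R := ℂ) q.2.1)) • σ.st q.2.2) := by
    intro q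
    rw [counit_comp_mulLR, TensorProduct.smul_tmul,
      eps_st σ Sinv hSinv₁ hSinv₂ e σD hD hH1,
      eps_st σ Sinv hSinv₁ hSinv₂ e σD hD hH1, eps_Sinv Sinv hSinv₂]
  simp only [h2] at h
  rw [h]
  rw [← map_sum, ← TensorProduct.tmul_sum]
  congr 1
  congr 1
  rw [Finset.sum_sigma]
  have h3 : ∀ p ∈ crep x, ∑ q ∈ crep p.1,
      (((starRingEnd ℂ) (Coalgebra.counit (R := ℂ) p.2))
        * ((starRingEnd ℂ) (Coalgebra.counit (R := ℂ) q.1))) • σ.st q.2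
      = ((starRingEnd ℂ) (Coalgebra.counit (R := ℂ) p.2)) • σ.st p.1 := by
    intro p _
    have h4 : σ.st p.1 = σ.st (∑ q ∈ crep p.1, Coalgebra.counit (R := ℂ) q.1 • q.2) := by
      rw [sum_eps_left (crep_spec p.1)]
    rw [h4, st_sum]
    rw [Finset.smul_sum]
    refine Finset.sum_congr rfl fun q _ => ?_
    rw [σ.st_smul, smul_smul]
  rw [Finset.sum_congr rfl h3]
  have h5 : σ.st x = σ.st (∑ p ∈ crep x, Coalgebra.counit (R := ℂ) p.2 • p.1) := by
    rw [sum_eps_right (crep_spec x)]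
  rw [h5, st_sum]
  exact Finset.sum_congr rfl fun p _ => by rw [σ.st_smul]

end Comul3Rep
section Diamond
variable {H : Type} [Ring H] [HopfAlgebra ℂ H]
  (σ : StarHopf H) (Sinv : H →ₗ[ℂ] H)
  (hSinv₁ : ∀ x : H, Sinv (HopfAlgebra.antipode (R := ℂ) x) = x)
  (hSinv₂ : ∀ x : H, HopfAlgebra.antipode (R := ℂ) (Sinv x) = x)
  {DH : Type} [Ring DH] [HopfAlgebra ℂ DH]
  (e : Module.Dual ℂ H ⊗[ℂ] H ≃ₗ[ℂ] DH) (σD : StarHopf DH)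
  (hD : IsQuantumDouble H σ Sinv DH e σD) (hH1 : (1 : H) ≠ 0)

set_option maxHeartbeats 1600000 in
set_option synthInstance.maxHeartbeats 400000 in
include hSinv₁ hSinv₂ hD hH1 in
lemma diamond {ι : Type} {x : H} {s : Finset ι} {x1 x2 : ι → H} (h : Rep2 x s x1 x2) :
    ∑ i ∈ s, x1 i * Sinv (x2 i) = Coalgebra.counit (R := ℂ) x • 1 := by
  classical
  have key : ∀ α : Module.Dual ℂ H,
      ∑ q ∈ s.sigma (fun i => crep (x1 i)),
        (starDual σ α) (σ.st (Sinv (x2 q.1)) * σ.st q.2.1)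
          * Coalgebra.counit (R := ℂ) (σ.st q.2.2)
      = ∑ q ∈ s.sigma (fun i => crep (x1 i)),
        (starDual σ α) (Sinv (σ.st (x2 q.1)) * σ.st q.2.1)
          * Coalgebra.counit (R := ℂ) (σ.st q.2.2) := by
    intro α
    have hA := hD.star_def α x (s.sigma (fun i => crep (x1 i)))
      (fun q => q.2.1) (fun q => q.2.2) (fun q => x2 q.1) (comul3_rep h)
    have hB : σD.st (e (α ⊗ₜ[ℂ] x))
        = ∑ q ∈ s.sigma (fun i => crep (x1 i)),
            e ((starDual σ α ∘ₗ ((LinearMap.mulRight ℂ (σ.st q.2.1)) ∘ₗ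
                (LinearMap.mulLeft ℂ (Sinv (σ.st (x2 q.1)))))) ⊗ₜ[ℂ] σ.st q.2.2) := by
      rw [factorE σ Sinv hSinv₁ e σD hD α x, σD.st_antimul,
        starE σ Sinv hSinv₁ hSinv₂ e σD hD hH1,
        starE1 σ Sinv hSinv₁ e σD hD,
        hD.mul_def (Coalgebra.counit (R := ℂ)) (starDual σ α) (σ.st x) 1
          (s.sigma (fun i => crep (x1 i)))
          (fun q => σ.st q.2.1) (fun q => σ.st q.2.2) (fun q => σ.st (x2 q.1))
          (comul3_st_rep σ h)]
      simp only [convMul_counit_left, mul_one]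
    have hC := hA.symm.trans hB
    have hC2 := congrArg
      (fun w => Coalgebra.counit (R := ℂ) (contrAt (1 : H) (e.symm w))) hC
    simpa only [map_sum, LinearEquiv.symm_apply_apply, contrAt_tmul,
      LinearMap.comp_apply, LinearMap.mulRight_apply, LinearMap.mulLeft_apply,
      mul_one, map_smul, smul_eq_mul] using hC2
  have key2 : ∑ q ∈ s.sigma (fun i => crep (x1 i)),
      Coalgebra.counit (R := ℂ) (σ.st q.2.2) • (σ.st (Sinv (x2 q.1)) * σ.st q.2.1)
      = ∑ q ∈ s.sigma (fun i => crep (x1 i)),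
        Coalgebra.counit (R := ℂ) (σ.st q.2.2) • (Sinv (σ.st (x2 q.1)) * σ.st q.2.1) := by
    apply dual_sep
    intro β
    have hk := key (starDual σ β)
    rw [starDual_starDual σ Sinv hSinv₁ e σD hD hH1 β] at hk
    simpa only [map_sum, map_smul, smul_eq_mul, mul_comm] using hk
  have hL : ∑ q ∈ s.sigma (fun i => crep (x1 i)),
      Coalgebra.counit (R := ℂ) (σ.st q.2.2) • (σ.st (Sinv (x2 q.1)) * σ.st q.2.1)
      = σ.st (∑ i ∈ s, x1 i * Sinv (x2 i)) := by
    rw [Finset.sum_sigma, st_sum]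
    refine Finset.sum_congr rfl fun i _ => ?_
    rw [σ.st_antimul]
    have : ∀ p ∈ crep (x1 i),
        Coalgebra.counit (R := ℂ) (σ.st p.2) • (σ.st (Sinv (x2 i)) * σ.st p.1)
        = σ.st (Sinv (x2 i)) * (Coalgebra.counit (R := ℂ) (σ.st p.2) • σ.st p.1) :=
      fun p _ => (mul_smul_comm _ _ _).symm
    rw [Finset.sum_congr rfl this, ← Finset.mul_sum]
    congr 1
    have : ∑ p ∈ crep (x1 i), Coalgebra.counit (R := ℂ) (σ.st p.2) • σ.st p.1
        = σ.st (∑ p ∈ crep (x1 i), Coalgebra.counit (R := ℂ) p.2 • p.1) := by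
      rw [st_sum]
      refine Finset.sum_congr rfl fun p _ => ?_
      rw [σ.st_smul, eps_st σ Sinv hSinv₁ hSinv₂ e σD hD hH1]
    rw [this, sum_eps_right (crep_spec (x1 i))]
  have hR : ∑ q ∈ s.sigma (fun i => crep (x1 i)),
      Coalgebra.counit (R := ℂ) (σ.st q.2.2) • (Sinv (σ.st (x2 q.1)) * σ.st q.2.1)
      = (starRingEnd ℂ) (Coalgebra.counit (R := ℂ) x) • 1 := by
    rw [Finset.sum_sigma]
    have hstep : ∀ i ∈ s, ∑ p ∈ crep (x1 i),
        Coalgebra.counit (R := ℂ) (σ.st p.2) • (Sinv (σ.st (x2 i)) * σ.st p.1)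
        = Sinv (σ.st (x2 i)) * σ.st (x1 i) := by
      intro i _
      have : ∀ p ∈ crep (x1 i),
          Coalgebra.counit (R := ℂ) (σ.st p.2) • (Sinv (σ.st (x2 i)) * σ.st p.1)
          = Sinv (σ.st (x2 i)) * (Coalgebra.counit (R := ℂ) (σ.st p.2) • σ.st p.1) :=
        fun p _ => (mul_smul_comm _ _ _).symm
      rw [Finset.sum_congr rfl this, ← Finset.mul_sum]
      congr 1
      have : ∑ p ∈ crep (x1 i), Coalgebra.counit (R := ℂ) (σ.st p.2) • σ.st p.1
          = σ.st (∑ p ∈ crep (x1 i), Coalgebra.counit (R := ℂ) p.2 • p.1) := by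
        rw [st_sum]
        refine Finset.sum_congr rfl fun p _ => ?_
        rw [σ.st_smul, eps_st σ Sinv hSinv₁ hSinv₂ e σD hD hH1]
      rw [this, sum_eps_right (crep_spec (x1 i))]
    rw [Finset.sum_congr rfl hstep,
      C1 σ Sinv hSinv₁ hSinv₂ e σD hD hH1 (rep2_st σ h),
      eps_st σ Sinv hSinv₁ hSinv₂ e σD hD hH1]
  rw [hL, hR] at key2
  have := congrArg σ.st key2
  rw [σ.st_invol, σ.st_smul, st_one] at this
  simpa using this

include hSinv₁ hSinv₂ hD hH1 in
lemma S_eq_Sinv (x : H) : HopfAlgebra.antipode (R := ℂ) x = Sinv x := by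
  classical
  set r := crepr x with hrdef
  have hTT := Coalgebra.sum_tmul_tmul_eq (R := ℂ) r
    (fun i => crepr (r.left i)) (fun i => crepr (r.right i))
  set F : H ⊗[ℂ] (H ⊗[ℂ] H) →ₗ[ℂ] H :=
    LinearMap.mul' ℂ H ∘ₗ (TensorProduct.map (HopfAlgebra.antipode (R := ℂ))
      (LinearMap.mul' ℂ H ∘ₗ TensorProduct.map LinearMap.id Sinv)) with hF
  have hFt : ∀ a b c : H, F (a ⊗ₜ[ℂ] (b ⊗ₜ[ℂ] c))
      = HopfAlgebra.antipode (R := ℂ) a * (b * Sinv c) := by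
    intro a b c
    simp [hF]
  have h2 := congrArg F hTT
  rw [map_sum, map_sum] at h2
  simp only [map_sum, hFt] at h2
  have hLHS : ∑ i ∈ r.index, ∑ j ∈ (crepr (r.left i)).index,
      HopfAlgebra.antipode (R := ℂ) ((crepr (r.left i)).left j)
        * ((crepr (r.left i)).right j * Sinv (r.right i)) = Sinv x := by
    have hstep : ∀ i ∈ r.index, ∑ j ∈ (crepr (r.left i)).index,
        HopfAlgebra.antipode (R := ℂ) ((crepr (r.left i)).left j)
          * ((crepr (r.left i)).right j * Sinv (r.right i))
        = Coalgebra.counit (R := ℂ) (r.left i) • Sinv (r.right i) := by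
      intro i _
      have : ∀ j ∈ (crepr (r.left i)).index,
          HopfAlgebra.antipode (R := ℂ) ((crepr (r.left i)).left j)
            * ((crepr (r.left i)).right j * Sinv (r.right i))
          = (HopfAlgebra.antipode (R := ℂ) ((crepr (r.left i)).left j)
            * (crepr (r.left i)).right j) * Sinv (r.right i) :=
        fun j _ => (mul_assoc _ _ _).symm
      rw [Finset.sum_congr rfl this, ← Finset.sum_mul,
        sum_S_mul (rep2_of_repr (crepr (r.left i))), smul_mul_assoc, one_mul]
    rw [Finset.sum_congr rfl hstep]
    have : ∑ i ∈ r.index, Coalgebra.counit (R := ℂ) (r.left i) • Sinv (r.right i)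
        = Sinv (∑ i ∈ r.index, Coalgebra.counit (R := ℂ) (r.left i) • r.right i) := by
      rw [map_sum]
      exact Finset.sum_congr rfl fun i _ => (map_smul _ _ _).symm
    rw [this, sum_eps_left (rep2_of_repr r)]
  have hRHS : ∑ i ∈ r.index, ∑ j ∈ (crepr (r.right i)).index,
      HopfAlgebra.antipode (R := ℂ) (r.left i)
        * ((crepr (r.right i)).left j * Sinv ((crepr (r.right i)).right j))
      = HopfAlgebra.antipode (R := ℂ) x := by
    have hstep : ∀ i ∈ r.index, ∑ j ∈ (crepr (r.right i)).index,
        HopfAlgebra.antipode (R := ℂ) (r.left i)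
          * ((crepr (r.right i)).left j * Sinv ((crepr (r.right i)).right j))
        = Coalgebra.counit (R := ℂ) (r.right i)
            • HopfAlgebra.antipode (R := ℂ) (r.left i) := by
      intro i _
      rw [← Finset.mul_sum,
        diamond σ Sinv hSinv₁ hSinv₂ e σD hD hH1 (rep2_of_repr (crepr (r.right i))),
        mul_smul_comm, mul_one]
    rw [Finset.sum_congr rfl hstep]
    have : ∑ i ∈ r.index, Coalgebra.counit (R := ℂ) (r.right i)
          • HopfAlgebra.antipode (R := ℂ) (r.left i)
        = HopfAlgebra.antipode (R := ℂ)
            (∑ i ∈ r.index, Coalgebra.counit (R := ℂ) (r.right i) • r.left i) := by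
      rw [map_sum]
      exact Finset.sum_congr rfl fun i _ => (map_smul _ _ _).symm
    rw [this, sum_eps_right (rep2_of_repr r)]
  rw [hLHS, hRHS] at h2
  exact h2.symm

end Diamond

set_option synthInstance.maxHeartbeats 1000000 in
lemma lequiv_map_zero {M N : Type} [AddCommGroup M] [Module ℂ M]
    [AddCommGroup N] [Module ℂ N] (e : M ≃ₗ[ℂ] N) : e 0 = 0 := map_zero e


/-- Let `H` be a finite dimensional `*`-Hopf algebra, let `W` be a
Yetter–Drinfel'd module over `H` (a left `H`-module and left `H`-comodule satisfying the
Yetter–Drinfel'd compatibility), regarded also as a module over the quantum double `D(H)`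
via the equivalence of categories, and let `⟨ , ⟩` be a hermitian form on `W`.  Then
`⟨ , ⟩` is invariant for the `D(H)`-module structure (`⟨d·u,v⟩ = ⟨u,d*·v⟩` for all
`d ∈ D(H)`) if and only if it is simultaneously invariant for the `H`-module structure
(`⟨x·u,v⟩ = ⟨u,x*·v⟩`) and for the `H`-comodule structure
(`∑ S(u₋₁)⟨u₀,v⟩ = ∑ v₋₁*⟨u,v₀⟩`). -/
theorem yetter_drinfeld_invariance_iff
    {H : Type} [Ring H] [HopfAlgebra ℂ H] [FiniteDimensional ℂ H] (σ : StarHopf H)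
    (Sinv : H →ₗ[ℂ] H)
    (hSinv₁ : ∀ x : H, Sinv (HopfAlgebra.antipode (R := ℂ) x) = x)
    (hSinv₂ : ∀ x : H, HopfAlgebra.antipode (R := ℂ) (Sinv x) = x)
    -- the quantum double with its involution
    (DH : Type) [Ring DH] [HopfAlgebra ℂ DH]
    (e : Module.Dual ℂ H ⊗[ℂ] H ≃ₗ[ℂ] DH) (σD : StarHopf DH)
    (hD : IsQuantumDouble H σ Sinv DH e σD)
    -- a Yetter–Drinfel'd module `W`
    (W : Type) [AddCommGroup W] [Module ℂ W]
    (m : LeftModuleStr H W) (c : LeftComodule H W)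
    (hYD : ∀ (x : H) (w : W) {ι κ : Type} (s : Finset ι) (t : Finset κ)
        (x1 x2 : ι → H) (h : κ → H) (w0 : κ → W),
        Rep2 x s x1 x2 → TRep (c.χ w) t h w0 →
        ∑ i ∈ s, (LinearMap.rTensor W (LinearMap.mulRight ℂ (x2 i)))
            (c.χ (m.act (x1 i) w))
          = ∑ i ∈ s, ∑ j ∈ t, (x1 i * h j) ⊗ₜ[ℂ] m.act (x2 i) (w0 j))
    -- the corresponding `D(H)`-module structure on `W`
    (mD : LeftModuleStr DH W)
    (hmD_H : ∀ (x : H) (w : W),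
        mD.act (e ((Coalgebra.counit (R := ℂ) : H →ₗ[ℂ] ℂ) ⊗ₜ[ℂ] x)) w = m.act x w)
    (hmD_dual : ∀ (α : Module.Dual ℂ H) (w : W) {κ : Type} (t : Finset κ)
        (h : κ → H) (w0 : κ → W), TRep (c.χ w) t h w0 →
        mD.act (e (α ⊗ₜ[ℂ] (1 : H))) w = ∑ j ∈ t, α (Sinv (h j)) • w0 j)
    -- a hermitian form on `W`
    (hm : W → W → ℂ)
    (hm_add : ∀ u u' v : W, hm (u + u') v = hm u v + hm u' v)
    (hm_smul : ∀ (a : ℂ) (u v : W), hm (a • u) v = a * hm u v)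
    (hm_conj : ∀ u v : W, hm v u = (starRingEnd ℂ) (hm u v)) :
    (∀ (d : DH) (u v : W), hm (mD.act d u) v = hm u (mD.act (σD.st d) v))
      ↔ ((∀ (x : H) (u v : W), hm (m.act x u) v = hm u (m.act (σ.st x) v)) ∧
          (∀ (u v : W) {ι κ : Type} (s : Finset ι) (t : Finset κ)
            (u1 : ι → H) (u0 : ι → W) (v1 : κ → H) (v0 : κ → W),
            TRep (c.χ u) s u1 u0 → TRep (c.χ v) t v1 v0 →
            ∑ i ∈ s, hm (u0 i) v • (HopfAlgebra.antipode (R := ℂ) (u1 i))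
              = ∑ j ∈ t, hm u (v0 j) • σ.st (v1 j))) := by
  classical
  by_cases hH1 : (1 : H) = 0
  · -- degenerate case: `H = 0`, hence `W = 0`
    have hW : ∀ w : W, w = 0 := by
      intro w
      have h0 : m.act (1 : H) w = w := m.act_one w
      rw [hH1] at h0
      rw [← h0, map_zero]
      rfl
    have hm00 : ∀ a b : W, hm a b = 0 := by
      intro a b
      have h1 : hm ((0 : ℂ) • (0 : W)) b = 0 * hm 0 b := hm_smul 0 0 b
      rw [zero_smul, zero_mul] at h1
      rw [hW a]
      exact h1
    constructor
    · intro _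
      refine ⟨fun x u v => by rw [hm00, hm00], ?_⟩
      intro u v ι κ s t u1 u0 v1 v0 _ _
      simp only [hm00, zero_smul, Finset.sum_const_zero]
    · intro _ d u v
      rw [hm00, hm00]
  · -- main case
    have hSS : ∀ y : H, HopfAlgebra.antipode (R := ℂ) y = Sinv y :=
      S_eq_Sinv σ Sinv hSinv₁ hSinv₂ e σD hD hH1
    have hstE : ∀ x : H, σD.st (e ((Coalgebra.counit (R := ℂ) : H →ₗ[ℂ] ℂ) ⊗ₜ[ℂ] x))
        = e ((Coalgebra.counit (R := ℂ) : H →ₗ[ℂ] ℂ) ⊗ₜ[ℂ] σ.st x) :=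
      starE σ Sinv hSinv₁ hSinv₂ e σD hD hH1
    have hstE1 : ∀ α : Module.Dual ℂ H,
        σD.st (e (α ⊗ₜ[ℂ] (1 : H))) = e (starDual σ α ⊗ₜ[ℂ] (1 : H)) :=
      starE1 σ Sinv hSinv₁ e σD hD
    have hm0 : ∀ v : W, hm 0 v = 0 := by
      intro v
      have h1 : hm ((0 : ℂ) • (0 : W)) v = 0 * hm 0 v := hm_smul 0 0 v
      rwa [zero_smul, zero_mul] at h1
    have hm0r : ∀ u : W, hm u 0 = 0 := by
      intro u
      rw [hm_conj, hm0, map_zero]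
    have hmaddr : ∀ u a b : W, hm u (a + b) = hm u a + hm u b := by
      intro u a b
      rw [hm_conj, hm_add, map_add, ← hm_conj, ← hm_conj]
    have hmsmulr : ∀ (a : ℂ) (u w : W), hm u (a • w) = (starRingEnd ℂ) a * hm u w := by
      intro a u w
      rw [hm_conj, hm_smul, map_mul, ← hm_conj]
    have hm_sum_left : ∀ {ι : Type} (s : Finset ι) (f : ι → W) (v : W),
        hm (∑ i ∈ s, f i) v = ∑ i ∈ s, hm (f i) v := by
      intro ι s f v
      induction s using Finset.induction_on with
      | empty => simpa using hm0 v
      | insert _ _ hx ih =>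
        rename_i a s' _
        rw [Finset.sum_insert hx, Finset.sum_insert hx, hm_add, ih]
    have hm_sum_right : ∀ {ι : Type} (s : Finset ι) (f : ι → W) (u : W),
        hm u (∑ i ∈ s, f i) = ∑ i ∈ s, hm u (f i) := by
      intro ι s f u
      induction s using Finset.induction_on with
      | empty => simpa using hm0r u
      | insert _ _ hx ih =>
        rename_i a s' _
        rw [Finset.sum_insert hx, Finset.sum_insert hx, hmaddr, ih]
    have hc : ∀ (α : Module.Dual ℂ H) (y : H),
        (starRingEnd ℂ) ((starDual σ α) (Sinv y)) = α (σ.st y) := by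
      intro α y
      rw [starDual_apply, Complex.conj_conj, hSinv₂]
    constructor
    · -- D(H)-invariance implies the two conditions
      intro hDInv
      constructor
      · intro x u v
        calc hm (m.act x u) v
            = hm (mD.act (e ((Coalgebra.counit (R := ℂ) : H →ₗ[ℂ] ℂ) ⊗ₜ[ℂ] x)) u) v := by
              rw [hmD_H]
          _ = hm u (mD.act (σD.st
                (e ((Coalgebra.counit (R := ℂ) : H →ₗ[ℂ] ℂ) ⊗ₜ[ℂ] x))) v) := hDInv _ u v
          _ = hm u (m.act (σ.st x) v) := by rw [hstE, hmD_H]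
      · intro u v ι κ s t u1 u0 v1 v0 hu hv
        apply dual_sep
        intro α
        have hDa := hDInv (e (α ⊗ₜ[ℂ] (1 : H))) u v
        rw [hmD_dual α u s u1 u0 hu, hstE1 α,
          hmD_dual (starDual σ α) v t v1 v0 hv, hm_sum_left, hm_sum_right] at hDa
        simp only [hm_smul, hmsmulr] at hDa
        simp only [map_sum, map_smul, smul_eq_mul, hSS]
        calc ∑ i ∈ s, hm (u0 i) v * α (Sinv (u1 i))
            = ∑ i ∈ s, α (Sinv (u1 i)) * hm (u0 i) v :=
              Finset.sum_congr rfl fun i _ => mul_comm _ _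
          _ = ∑ j ∈ t, (starRingEnd ℂ) ((starDual σ α) (Sinv (v1 j))) * hm u (v0 j) := hDa
          _ = ∑ j ∈ t, hm u (v0 j) * α (σ.st (v1 j)) :=
              Finset.sum_congr rfl fun j _ => by rw [hc, mul_comm]
    · -- the two conditions imply D(H)-invariance
      rintro ⟨hHinv, hB⟩
      have hPε : ∀ (x : H) (u v : W),
          hm (mD.act (e ((Coalgebra.counit (R := ℂ) : H →ₗ[ℂ] ℂ) ⊗ₜ[ℂ] x)) u) v
          = hm u (mD.act (σD.st
              (e ((Coalgebra.counit (R := ℂ) : H →ₗ[ℂ] ℂ) ⊗ₜ[ℂ] x))) v) := by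
        intro x u v
        rw [hstE, hmD_H, hmD_H]
        exact hHinv x u v
      have hPα : ∀ (α : Module.Dual ℂ H) (u v : W),
          hm (mD.act (e (α ⊗ₜ[ℂ] (1 : H))) u) v
          = hm u (mD.act (σD.st (e (α ⊗ₜ[ℂ] (1 : H)))) v) := by
        intro α u v
        obtain ⟨Su, hSu⟩ := TensorProduct.exists_finset (R := ℂ) (c.χ u)
        obtain ⟨Sv, hSv⟩ := TensorProduct.exists_finset (R := ℂ) (c.χ v)
        have hTu : TRep (c.χ u) Su Prod.fst Prod.snd := hSu
        have hTv : TRep (c.χ v) Sv Prod.fst Prod.snd := hSv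
        rw [hmD_dual α u Su Prod.fst Prod.snd hTu, hstE1 α,
          hmD_dual (starDual σ α) v Sv Prod.fst Prod.snd hTv,
          hm_sum_left, hm_sum_right]
        simp only [hm_smul, hmsmulr]
        have hBa := congrArg α (hB u v Su Sv Prod.fst Prod.snd Prod.fst Prod.snd hTu hTv)
        simp only [map_sum, map_smul, smul_eq_mul, hSS] at hBa
        calc ∑ p ∈ Su, α (Sinv p.1) * hm p.2 v
            = ∑ p ∈ Su, hm p.2 v * α (Sinv p.1) :=
              Finset.sum_congr rfl fun p _ => mul_comm _ _
          _ = ∑ q ∈ Sv, hm u q.2 * α (σ.st q.1) := hBa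
          _ = ∑ q ∈ Sv, (starRingEnd ℂ) ((starDual σ α) (Sinv q.1)) * hm u q.2 :=
              Finset.sum_congr rfl fun q _ => by rw [hc, mul_comm]
      have key : ∀ (w : Module.Dual ℂ H ⊗[ℂ] H) (u v : W),
          hm (mD.act (e w) u) v = hm u (mD.act (σD.st (e w)) v) := by
        intro w
        induction w using TensorProduct.induction_on with
        | zero =>
          intro u v
          rw [lequiv_map_zero e]
          simp only [map_zero, st_zero σD, LinearMap.zero_apply]
          rw [hm0, hm0r]
        | tmul α x =>
          intro u v
          rw [factorE σ Sinv hSinv₁ e σD hD α x]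
          calc hm (mD.act (e (α ⊗ₜ[ℂ] (1 : H))
                  * e ((Coalgebra.counit (R := ℂ) : H →ₗ[ℂ] ℂ) ⊗ₜ[ℂ] x)) u) v
              = hm (mD.act (e (α ⊗ₜ[ℂ] (1 : H)))
                  (mD.act (e ((Coalgebra.counit (R := ℂ) : H →ₗ[ℂ] ℂ) ⊗ₜ[ℂ] x)) u)) v := by
                rw [mD.act_mul]
            _ = hm (mD.act (e ((Coalgebra.counit (R := ℂ) : H →ₗ[ℂ] ℂ) ⊗ₜ[ℂ] x)) u)
                  (mD.act (σD.st (e (α ⊗ₜ[ℂ] (1 : H)))) v) := hPα α _ v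
            _ = hm u (mD.act (σD.st
                  (e ((Coalgebra.counit (R := ℂ) : H →ₗ[ℂ] ℂ) ⊗ₜ[ℂ] x)))
                  (mD.act (σD.st (e (α ⊗ₜ[ℂ] (1 : H)))) v)) := hPε x u _
            _ = hm u (mD.act (σD.st (e (α ⊗ₜ[ℂ] (1 : H))
                  * e ((Coalgebra.counit (R := ℂ) : H →ₗ[ℂ] ℂ) ⊗ₜ[ℂ] x))) v) := by
                rw [σD.st_antimul, mD.act_mul]
        | add w1 w2 ih1 ih2 =>
          intro u v
          rw [map_add, map_add, σD.st_add, map_add]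
          rw [LinearMap.add_apply, LinearMap.add_apply, hm_add, hmaddr, ih1 u v, ih2 u v]
      intro d u v
      have := key (e.symm d) u v
      rwa [e.apply_symm_apply] at this
end
end
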